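/- arXiv:0901.0055 — 4 statements merged into one kernel-verified Lean document; each statement's English description precedes it below -/
import Mathlib

section
/- Let G be an abelian group and Z1,…,Zn independent discrete random variables in G. For subsets s of [n], write Z_s^+ = ∑_{i∈s} Z_i. Then the set function s ↦ H(Z_s^+) is submodular: for all s,t ⊆ [n], H(Z_{s∪t}^+) + H(Z_{s∩t}^+) ≤ H(Z_s^+) + H(Z_t^+). -/
open Finset

/-- Shannon entropy of a discrete random variable `X` on a finite probability
space with probability mass function `p`. -/
noncomputable def ent {Ω S : Type*} [Fintype Ω] (p : Ω → ℝ) (X : Ω → S) : ℝ :=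
  letI := Classical.decEq S
  ∑ y ∈ Finset.univ.image X,
    Real.negMulLog (∑ ω ∈ Finset.univ.filter (fun ω => X ω = y), p ω)

/-- Conditional Shannon entropy `H(X | Y)`. -/
noncomputable def condEnt {Ω S T : Type*} [Fintype Ω] (p : Ω → ℝ)
    (X : Ω → S) (Y : Ω → T) : ℝ :=
  ent p (fun ω => (X ω, Y ω)) - ent p Y

/-- Mutual information `I(X ; Y)`. -/
noncomputable def mutInf {Ω S T : Type*} [Fintype Ω] (p : Ω → ℝ)
    (X : Ω → S) (Y : Ω → T) : ℝ :=
  ent p X + ent p Y - ent p (fun ω => (X ω, Y ω))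

/-- `p` is a probability mass function. -/
def IsProbMass {Ω : Type*} [Fintype Ω] (p : Ω → ℝ) : Prop :=
  (∀ ω, 0 ≤ p ω) ∧ ∑ ω, p ω = 1

/-- The random variables `Z i` are mutually independent. -/
def IndepRVs {Ω G : Type*} [Fintype Ω] {n : ℕ} (p : Ω → ℝ) (Z : Fin n → Ω → G) : Prop :=
  letI := Classical.decEq G
  ∀ z : Fin n → G,
    (∑ ω ∈ Finset.univ.filter (fun ω => ∀ i, Z i ω = z i), p ω)
      = ∏ i, ∑ ω ∈ Finset.univ.filter (fun ω => Z i ω = z i), p ω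

namespace SubmodAux
variable {Ω : Type*} [Fintype Ω]

noncomputable def massD {S : Type*} [DecidableEq S] (p : Ω → ℝ) (X : Ω → S) (y : S) : ℝ :=
  ∑ ω ∈ Finset.univ.filter (fun ω => X ω = y), p ω

noncomputable def entD {S : Type*} [DecidableEq S] (p : Ω → ℝ) (X : Ω → S) : ℝ :=
  ∑ y ∈ Finset.univ.image X, Real.negMulLog (massD p X y)

lemma ent_eq_entD {S : Type*} [DecidableEq S] (p : Ω → ℝ) (X : Ω → S) :
    ent p X = entD p X := by
  unfold ent entD massD
  congr!

lemma massD_nonneg {S : Type*} [DecidableEq S] {p : Ω → ℝ} (hp0 : ∀ ω, 0 ≤ p ω)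
    (X : Ω → S) (y : S) : 0 ≤ massD p X y :=
  Finset.sum_nonneg fun ω _ => hp0 ω

lemma massD_eq_zero {S : Type*} [DecidableEq S] (p : Ω → ℝ) (X : Ω → S) {y : S}
    (hy : ∀ ω, X ω ≠ y) : massD p X y = 0 := by
  unfold massD
  rw [Finset.sum_eq_zero]
  intro ω hω
  rw [Finset.mem_filter] at hω
  exact absurd hω.2 (hy ω)

lemma sum_massD {S : Type*} [DecidableEq S] (p : Ω → ℝ) (X : Ω → S) :
    ∑ y ∈ Finset.univ.image X, massD p X y = ∑ ω, p ω := by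
  unfold massD
  exact Finset.sum_fiberwise_of_maps_to
    (fun ω _ => Finset.mem_image.2 ⟨ω, Finset.mem_univ ω, rfl⟩) p

lemma entD_sum_superset {S : Type*} [DecidableEq S] (p : Ω → ℝ) (X : Ω → S) (B : Finset S)
    (hB : ∀ ω, X ω ∈ B) :
    entD p X = ∑ y ∈ B, Real.negMulLog (massD p X y) := by
  refine Finset.sum_subset (fun y hy => ?_) (fun y _ hy => ?_)
  · rw [Finset.mem_image] at hy; obtain ⟨ω, _, rfl⟩ := hy; exact hB ω
  · have : ∀ ω, X ω ≠ y := fun ω h =>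
      hy (Finset.mem_image.2 ⟨ω, Finset.mem_univ ω, h⟩)
    rw [massD_eq_zero p X this, Real.negMulLog_zero]

lemma massD_comp_inj {S T : Type*} [DecidableEq S] [DecidableEq T]
    (p : Ω → ℝ) (X : Ω → S) {g : S → T} (hg : Function.Injective g) (y : S) :
    massD p (fun ω => g (X ω)) (g y) = massD p X y := by
  unfold massD
  apply Finset.sum_congr _ (fun _ _ => rfl)
  ext ω
  simp [hg.eq_iff]

lemma entD_comp_inj {S T : Type*} [DecidableEq S] [DecidableEq T]
    (p : Ω → ℝ) (X : Ω → S) {g : S → T} (hg : Function.Injective g) :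
    entD p (fun ω => g (X ω)) = entD p X := by
  unfold entD
  have himg : (Finset.univ.image fun ω => g (X ω)) = (Finset.univ.image X).image g := by
    rw [Finset.image_image]; rfl
  rw [himg, Finset.sum_image (fun a _ b _ h => hg h)]
  exact Finset.sum_congr rfl fun y _ => by rw [massD_comp_inj p X hg]

lemma entD_pair_indep {S T : Type*} [DecidableEq S] [DecidableEq T]
    (p : Ω → ℝ) (hp1 : ∑ ω, p ω = 1) (X : Ω → S) (Y : Ω → T)
    (hfac : ∀ x y, massD p (fun ω => (X ω, Y ω)) (x, y) = massD p X x * massD p Y y) :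
    entD p (fun ω => (X ω, Y ω)) = entD p X + entD p Y := by
  have hX1 : ∑ x ∈ Finset.univ.image X, massD p X x = 1 := by rw [sum_massD]; exact hp1
  have hY1 : ∑ y ∈ Finset.univ.image Y, massD p Y y = 1 := by rw [sum_massD]; exact hp1
  rw [entD_sum_superset p _ ((Finset.univ.image X) ×ˢ (Finset.univ.image Y))
    (fun ω => Finset.mem_product.2
      ⟨Finset.mem_image.2 ⟨ω, Finset.mem_univ ω, rfl⟩,
       Finset.mem_image.2 ⟨ω, Finset.mem_univ ω, rfl⟩⟩)]
  rw [Finset.sum_product]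
  simp_rw [hfac, Real.negMulLog_mul, Finset.sum_add_distrib, ← Finset.mul_sum,
    ← Finset.sum_mul, hY1, hX1]
  unfold entD
  ring_nf

lemma massD_le_massD_comp {S T : Type*} [DecidableEq S] [DecidableEq T] {p : Ω → ℝ}
    (hp0 : ∀ ω, 0 ≤ p ω) (X : Ω → S) (pr : S → T) (τ : S) :
    massD p X τ ≤ massD p (fun ω => pr (X ω)) (pr τ) := by
  unfold massD
  apply Finset.sum_le_sum_of_subset_of_nonneg
  · intro ω hω
    rw [Finset.mem_filter] at hω ⊢
    exact ⟨hω.1, congrArg pr hω.2⟩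
  · intro ω _ _; exact hp0 ω

lemma massD_comp_eq_sum_fiber {S T : Type*} [DecidableEq S] [DecidableEq T]
    (p : Ω → ℝ) (X : Ω → S) (pr : S → T) (y : T) :
    massD p (fun ω => pr (X ω)) y
      = ∑ τ ∈ (Finset.univ.image X).filter (fun τ => pr τ = y), massD p X τ := by
  unfold massD
  rw [← Finset.sum_fiberwise_of_maps_to (g := X)
      (t := (Finset.univ.image X).filter (fun τ => pr τ = y))
      (fun ω hω => by
        rw [Finset.mem_filter] at hω ⊢
        exact ⟨Finset.mem_image.2 ⟨ω, Finset.mem_univ ω, rfl⟩, hω.2⟩) p]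
  apply Finset.sum_congr rfl
  intro τ hτ
  rw [Finset.mem_filter] at hτ
  apply Finset.sum_congr _ (fun _ _ => rfl)
  ext ω
  simp only [Finset.mem_filter, Finset.mem_univ, true_and]
  constructor
  · rintro ⟨_, h⟩; exact h
  · intro h; exact ⟨by rw [h]; exact hτ.2, h⟩

lemma entD_proj_eq {S T : Type*} [DecidableEq S] [DecidableEq T]
    (p : Ω → ℝ) (X : Ω → S) (pr : S → T) :
    entD p (fun ω => pr (X ω))
      = -∑ τ ∈ Finset.univ.image X,
          massD p X τ * Real.log (massD p (fun ω => pr (X ω)) (pr τ)) := by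
  unfold entD
  have himg : (Finset.univ.image fun ω => pr (X ω)) = (Finset.univ.image X).image pr := by
    rw [Finset.image_image]; rfl
  rw [himg]
  have key : ∀ y ∈ (Finset.univ.image X).image pr,
      Real.negMulLog (massD p (fun ω => pr (X ω)) y)
        = -∑ τ ∈ (Finset.univ.image X).filter (fun τ => pr τ = y),
            massD p X τ * Real.log (massD p (fun ω => pr (X ω)) (pr τ)) := by
    intro y hy
    rw [Real.negMulLog, neg_mul, massD_comp_eq_sum_fiber p X pr y, Finset.sum_mul]
    congr 1
    apply Finset.sum_congr rfl
    intro τ hτ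
    rw [Finset.mem_filter] at hτ
    rw [hτ.2, massD_comp_eq_sum_fiber p X pr y]
  rw [Finset.sum_congr rfl key, Finset.sum_neg_distrib]
  congr 1
  exact Finset.sum_fiberwise_of_maps_to (fun τ hτ => Finset.mem_image_of_mem pr hτ) _

lemma sum_massD_pair_left {S T : Type*} [DecidableEq S] [DecidableEq T]
    (p : Ω → ℝ) (X : Ω → S) (Y : Ω → T) (w : T) :
    ∑ u ∈ Finset.univ.image X, massD p (fun ω => (X ω, Y ω)) (u, w) = massD p Y w := by
  unfold massD
  rw [← Finset.sum_fiberwise_of_maps_to (g := X) (s := Finset.univ.filter (fun ω => Y ω = w))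
      (t := Finset.univ.image X)
      (fun ω _ => Finset.mem_image.2 ⟨ω, Finset.mem_univ ω, rfl⟩) p]
  apply Finset.sum_congr rfl
  intro u _
  apply Finset.sum_congr _ (fun _ _ => rfl)
  ext ω
  simp only [Finset.mem_filter, Finset.mem_univ, true_and, Finset.filter_filter,
    Prod.mk.injEq]
  tauto


lemma sum_frac_le_one {S₁ S₂ S₃ : Type*} [DecidableEq S₁] [DecidableEq S₂] [DecidableEq S₃]
    {p : Ω → ℝ} (hp0 : ∀ ω, 0 ≤ p ω) (hp1 : ∑ ω, p ω = 1) (X : Ω → S₁ × S₂ × S₃)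
    (J : Finset (S₁ × S₂ × S₃))
    (hJ : ∀ τ ∈ J, τ ∈ Finset.univ.image X ∧ 0 < massD p X τ) :
    ∑ τ ∈ J, massD p (fun ω => ((X ω).1, (X ω).2.2)) (τ.1, τ.2.2)
        * massD p (fun ω => ((X ω).2.1, (X ω).2.2)) (τ.2.1, τ.2.2)
        / massD p (fun ω => (X ω).2.2) τ.2.2 ≤ 1 := by
  have hmaps : ∀ τ ∈ J, τ.2.2 ∈ Finset.univ.image (fun ω => (X ω).2.2) := by
    intro τ hτ
    obtain ⟨hτI, -⟩ := hJ τ hτ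
    rw [Finset.mem_image] at hτI
    obtain ⟨ω, -, rfl⟩ := hτI
    exact Finset.mem_image.2 ⟨ω, Finset.mem_univ ω, rfl⟩
  rw [← Finset.sum_fiberwise_of_maps_to hmaps
    (fun τ : S₁ × S₂ × S₃ => massD p (fun ω => ((X ω).1, (X ω).2.2)) (τ.1, τ.2.2)
        * massD p (fun ω => ((X ω).2.1, (X ω).2.2)) (τ.2.1, τ.2.2)
        / massD p (fun ω => (X ω).2.2) τ.2.2)]
  have hblock : ∀ w ∈ Finset.univ.image (fun ω => (X ω).2.2),
      ∑ τ ∈ J.filter (fun τ => τ.2.2 = w),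
        massD p (fun ω => ((X ω).1, (X ω).2.2)) (τ.1, τ.2.2)
          * massD p (fun ω => ((X ω).2.1, (X ω).2.2)) (τ.2.1, τ.2.2)
          / massD p (fun ω => (X ω).2.2) τ.2.2
      ≤ massD p (fun ω => (X ω).2.2) w := by
    intro w _
    have hrw : ∀ τ ∈ J.filter (fun τ => τ.2.2 = w),
        massD p (fun ω => ((X ω).1, (X ω).2.2)) (τ.1, τ.2.2)
          * massD p (fun ω => ((X ω).2.1, (X ω).2.2)) (τ.2.1, τ.2.2)
          / massD p (fun ω => (X ω).2.2) τ.2.2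
        = massD p (fun ω => ((X ω).1, (X ω).2.2)) (τ.1, w)
          * massD p (fun ω => ((X ω).2.1, (X ω).2.2)) (τ.2.1, w)
          / massD p (fun ω => (X ω).2.2) w := by
      intro τ hτ
      rw [Finset.mem_filter] at hτ
      rw [hτ.2]
    rw [Finset.sum_congr rfl hrw]
    rcases Finset.eq_empty_or_nonempty (J.filter (fun τ => τ.2.2 = w)) with he | ⟨τ0, hτ0⟩
    · rw [he, Finset.sum_empty]
      exact massD_nonneg hp0 _ w
    · have hτ0' := hτ0
      rw [Finset.mem_filter] at hτ0'
      have h3 : 0 < massD p (fun ω => (X ω).2.2) w := by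
        have := lt_of_lt_of_le (hJ τ0 hτ0'.1).2
          (massD_le_massD_comp hp0 X (fun τ => τ.2.2) τ0)
        rwa [hτ0'.2] at this
      rw [← Finset.sum_div, div_le_iff₀ h3]
      calc ∑ τ ∈ J.filter (fun τ => τ.2.2 = w),
            massD p (fun ω => ((X ω).1, (X ω).2.2)) (τ.1, w)
              * massD p (fun ω => ((X ω).2.1, (X ω).2.2)) (τ.2.1, w)
          = ∑ uv ∈ (J.filter (fun τ => τ.2.2 = w)).image (fun τ => (τ.1, τ.2.1)),
              massD p (fun ω => ((X ω).1, (X ω).2.2)) (uv.1, w)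
                * massD p (fun ω => ((X ω).2.1, (X ω).2.2)) (uv.2, w) := by
            rw [Finset.sum_image]
            intro τ hτ τ' hτ' h
            rw [Finset.mem_coe, Finset.mem_filter] at hτ hτ'
            rw [Prod.mk.injEq] at h
            exact Prod.ext h.1 (Prod.ext h.2 (hτ.2.trans hτ'.2.symm))
        _ ≤ ∑ uv ∈ (Finset.univ.image (fun ω => (X ω).1))
              ×ˢ (Finset.univ.image (fun ω => (X ω).2.1)),
              massD p (fun ω => ((X ω).1, (X ω).2.2)) (uv.1, w)
                * massD p (fun ω => ((X ω).2.1, (X ω).2.2)) (uv.2, w) := by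
            apply Finset.sum_le_sum_of_subset_of_nonneg
            · intro uv huv
              rw [Finset.mem_image] at huv
              obtain ⟨τ, hτ, rfl⟩ := huv
              rw [Finset.mem_filter] at hτ
              obtain ⟨hτI, -⟩ := hJ τ hτ.1
              rw [Finset.mem_image] at hτI
              obtain ⟨ω, -, rfl⟩ := hτI
              exact Finset.mem_product.2
                ⟨Finset.mem_image.2 ⟨ω, Finset.mem_univ ω, rfl⟩,
                 Finset.mem_image.2 ⟨ω, Finset.mem_univ ω, rfl⟩⟩
            · intro uv _ _
              exact mul_nonneg (massD_nonneg hp0 _ _) (massD_nonneg hp0 _ _)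
        _ = (∑ u ∈ Finset.univ.image (fun ω => (X ω).1),
              massD p (fun ω => ((X ω).1, (X ω).2.2)) (u, w))
            * (∑ v ∈ Finset.univ.image (fun ω => (X ω).2.1),
              massD p (fun ω => ((X ω).2.1, (X ω).2.2)) (v, w)) := by
            rw [Finset.sum_mul_sum, Finset.sum_product]
        _ = massD p (fun ω => (X ω).2.2) w * massD p (fun ω => (X ω).2.2) w := by
            rw [sum_massD_pair_left p (fun ω => (X ω).1) (fun ω => (X ω).2.2) w,
              sum_massD_pair_left p (fun ω => (X ω).2.1) (fun ω => (X ω).2.2) w]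
  refine (Finset.sum_le_sum hblock).trans ?_
  rw [sum_massD p (fun ω => (X ω).2.2)]
  exact le_of_eq hp1


lemma strong_subadd {S₁ S₂ S₃ : Type*} [DecidableEq S₁] [DecidableEq S₂] [DecidableEq S₃]
    (p : Ω → ℝ) (hp0 : ∀ ω, 0 ≤ p ω) (hp1 : ∑ ω, p ω = 1) (X : Ω → S₁ × S₂ × S₃) :
    entD p X + entD p (fun ω => (X ω).2.2)
      ≤ entD p (fun ω => ((X ω).1, (X ω).2.2))
        + entD p (fun ω => ((X ω).2.1, (X ω).2.2)) := by
  have e3 := entD_proj_eq p X (fun τ => τ.2.2)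
  have e13 := entD_proj_eq p X (fun τ => (τ.1, τ.2.2))
  have e23 := entD_proj_eq p X (fun τ => (τ.2.1, τ.2.2))
  have e123 : entD p X
      = -∑ τ ∈ Finset.univ.image X, massD p X τ * Real.log (massD p X τ) := by
    unfold entD
    rw [← Finset.sum_neg_distrib]
    exact Finset.sum_congr rfl fun τ _ => by rw [Real.negMulLog, neg_mul]
  rw [e3, e13, e23, e123]
  have key : ∑ τ ∈ Finset.univ.image X,
      (massD p X τ * Real.log (massD p (fun ω => ((X ω).1, (X ω).2.2)) (τ.1, τ.2.2))
      + massD p X τ * Real.log (massD p (fun ω => ((X ω).2.1, (X ω).2.2)) (τ.2.1, τ.2.2))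
      - massD p X τ * Real.log (massD p X τ)
      - massD p X τ * Real.log (massD p (fun ω => (X ω).2.2) τ.2.2)) ≤ 0 := by
    rw [← Finset.sum_filter_of_ne (p := fun τ => 0 < massD p X τ) (fun τ hτ hne => by
      by_contra h
      have h0 : massD p X τ = 0 := le_antisymm (not_lt.1 h) (massD_nonneg hp0 X τ)
      exact hne (by simp [h0]))]
    have hsum1 : ∑ τ ∈ (Finset.univ.image X).filter (fun τ => 0 < massD p X τ),
        massD p X τ = 1 := by
      rw [Finset.sum_filter_of_ne (fun τ _ hne =>
        lt_of_le_of_ne (massD_nonneg hp0 X τ) (Ne.symm hne)), sum_massD p X]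
      exact hp1
    have hbound : ∀ τ ∈ (Finset.univ.image X).filter (fun τ => 0 < massD p X τ),
        massD p X τ * Real.log (massD p (fun ω => ((X ω).1, (X ω).2.2)) (τ.1, τ.2.2))
        + massD p X τ * Real.log (massD p (fun ω => ((X ω).2.1, (X ω).2.2)) (τ.2.1, τ.2.2))
        - massD p X τ * Real.log (massD p X τ)
        - massD p X τ * Real.log (massD p (fun ω => (X ω).2.2) τ.2.2)
        ≤ massD p (fun ω => ((X ω).1, (X ω).2.2)) (τ.1, τ.2.2)
            * massD p (fun ω => ((X ω).2.1, (X ω).2.2)) (τ.2.1, τ.2.2)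
            / massD p (fun ω => (X ω).2.2) τ.2.2
          - massD p X τ := by
      intro τ hτ
      rw [Finset.mem_filter] at hτ
      have hPτ : 0 < massD p X τ := hτ.2
      have h13 : 0 < massD p (fun ω => ((X ω).1, (X ω).2.2)) (τ.1, τ.2.2) :=
        lt_of_lt_of_le hPτ (massD_le_massD_comp hp0 X (fun τ => (τ.1, τ.2.2)) τ)
      have h23 : 0 < massD p (fun ω => ((X ω).2.1, (X ω).2.2)) (τ.2.1, τ.2.2) :=
        lt_of_lt_of_le hPτ (massD_le_massD_comp hp0 X (fun τ => (τ.2.1, τ.2.2)) τ)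
      have h3 : 0 < massD p (fun ω => (X ω).2.2) τ.2.2 :=
        lt_of_lt_of_le hPτ (massD_le_massD_comp hp0 X (fun τ => τ.2.2) τ)
      set A := massD p (fun ω => ((X ω).1, (X ω).2.2)) (τ.1, τ.2.2) with hA
      set B := massD p (fun ω => ((X ω).2.1, (X ω).2.2)) (τ.2.1, τ.2.2) with hB
      set C := massD p X τ with hC
      set D := massD p (fun ω => (X ω).2.2) τ.2.2 with hD
      have hlog : Real.log A + Real.log B - Real.log C - Real.log D
          = Real.log (A * B / (C * D)) := by
        rw [Real.log_div (by positivity) (by positivity),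
          Real.log_mul (ne_of_gt h13) (ne_of_gt h23),
          Real.log_mul (ne_of_gt hPτ) (ne_of_gt h3)]
        ring
      have hle : Real.log (A * B / (C * D)) ≤ A * B / (C * D) - 1 :=
        Real.log_le_sub_one_of_pos (by positivity)
      have h1 : C * Real.log A + C * Real.log B - C * Real.log C - C * Real.log D
          = C * (Real.log A + Real.log B - Real.log C - Real.log D) := by ring
      rw [h1, hlog]
      have h2 := mul_le_mul_of_nonneg_left hle hPτ.le
      refine h2.trans_eq ?_
      field_simp
    refine (Finset.sum_le_sum hbound).trans ?_
    rw [Finset.sum_sub_distrib, hsum1]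
    have hfrac := sum_frac_le_one hp0 hp1 X
      ((Finset.univ.image X).filter (fun τ => 0 < massD p X τ))
      (fun τ hτ => by rw [Finset.mem_filter] at hτ; exact hτ)
    linarith
  have expand : ∑ τ ∈ Finset.univ.image X,
      (massD p X τ * Real.log (massD p (fun ω => ((X ω).1, (X ω).2.2)) (τ.1, τ.2.2))
      + massD p X τ * Real.log (massD p (fun ω => ((X ω).2.1, (X ω).2.2)) (τ.2.1, τ.2.2))
      - massD p X τ * Real.log (massD p X τ)
      - massD p X τ * Real.log (massD p (fun ω => (X ω).2.2) τ.2.2))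
      = (∑ τ ∈ Finset.univ.image X,
          massD p X τ * Real.log (massD p (fun ω => ((X ω).1, (X ω).2.2)) (τ.1, τ.2.2)))
        + (∑ τ ∈ Finset.univ.image X,
          massD p X τ * Real.log (massD p (fun ω => ((X ω).2.1, (X ω).2.2)) (τ.2.1, τ.2.2)))
        - (∑ τ ∈ Finset.univ.image X, massD p X τ * Real.log (massD p X τ))
        - (∑ τ ∈ Finset.univ.image X,
          massD p X τ * Real.log (massD p (fun ω => (X ω).2.2) τ.2.2)) := by
    rw [Finset.sum_sub_distrib, Finset.sum_sub_distrib, Finset.sum_add_distrib]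
  rw [expand] at key
  linarith


/-- Partitioning an event defined through the tuple of the `Z i` by the tuple value. -/
lemma sum_filter_tuple_eq {G : Type*} [DecidableEq G] {n : ℕ} (p : Ω → ℝ)
    (Z : Fin n → Ω → G) (Q : (Fin n → G) → Prop) [DecidablePred Q] :
    ∑ ω ∈ Finset.univ.filter (fun ω => Q (fun i => Z i ω)), p ω
      = ∑ z ∈ (Fintype.piFinset (fun i => Finset.univ.image (Z i))).filter Q,
          ∑ ω ∈ Finset.univ.filter (fun ω => ∀ i, Z i ω = z i), p ω := by
  rw [← Finset.sum_fiberwise_of_maps_to (g := fun ω => fun i => Z i ω)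
      (t := (Fintype.piFinset (fun i => Finset.univ.image (Z i))).filter Q)
      (fun ω hω => by
        rw [Finset.mem_filter] at hω ⊢
        exact ⟨Fintype.mem_piFinset.2 fun i =>
          Finset.mem_image.2 ⟨ω, Finset.mem_univ ω, rfl⟩, hω.2⟩) p]
  apply Finset.sum_congr rfl
  intro z hz
  rw [Finset.mem_filter] at hz
  apply Finset.sum_congr _ (fun _ _ => rfl)
  ext ω
  simp only [Finset.mem_filter, Finset.mem_univ, true_and, funext_iff]
  constructor
  · rintro ⟨_, h⟩; exact h
  · intro h
    refine ⟨?_, h⟩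
    have : (fun i => Z i ω) = z := funext h
    rw [this]
    exact hz.2

/-- Instance-friendly version of the independence hypothesis. -/
lemma indep' {G : Type*} [DecidableEq G] {n : ℕ} {p : Ω → ℝ} {Z : Fin n → Ω → G}
    (hZ : IndepRVs p Z) (z : Fin n → G) :
    ∑ ω ∈ Finset.univ.filter (fun ω => ∀ i, Z i ω = z i), p ω
      = ∏ i, massD p (Z i) (z i) := by
  refine Eq.trans (by congr!) (Eq.trans (hZ z) ?_)
  unfold massD
  congr!

/-- Functions of disjoint blocks of independent random variables have
factorizing joint masses. -/
lemma twoBlock {G : Type*} [DecidableEq G] {n : ℕ} {p : Ω → ℝ}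
    (hp1 : ∑ ω, p ω = 1) {Z : Fin n → Ω → G} (hZ : IndepRVs p Z)
    {S₁ S₂ : Type*} [DecidableEq S₁] [DecidableEq S₂]
    (a : Finset (Fin n)) (f : (Fin n → G) → S₁) (g : (Fin n → G) → S₂)
    (hf : ∀ z z', (∀ i ∈ a, z i = z' i) → f z = f z')
    (hg : ∀ z z', (∀ i ∉ a, z i = z' i) → g z = g z')
    (x : S₁) (y : S₂) :
    massD p (fun ω => (f (fun i => Z i ω), g (fun i => Z i ω))) (x, y)
      = massD p (fun ω => f (fun i => Z i ω)) x
        * massD p (fun ω => g (fun i => Z i ω)) y := by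
  classical
  have hpair : massD p (fun ω => (f (fun i => Z i ω), g (fun i => Z i ω))) (x, y)
      = ∑ z ∈ (Fintype.piFinset (fun i => Finset.univ.image (Z i))).filter
          (fun z => (f z, g z) = (x, y)), ∏ i, massD p (Z i) (z i) := by
    unfold massD
    rw [sum_filter_tuple_eq p Z (fun z => (f z, g z) = (x, y))]
    exact Finset.sum_congr rfl fun z _ => indep' hZ z
  have hx : massD p (fun ω => f (fun i => Z i ω)) x
      = ∑ z ∈ (Fintype.piFinset (fun i => Finset.univ.image (Z i))).filter
          (fun z => f z = x), ∏ i, massD p (Z i) (z i) := by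
    unfold massD
    rw [sum_filter_tuple_eq p Z (fun z => f z = x)]
    exact Finset.sum_congr rfl fun z _ => indep' hZ z
  have hy : massD p (fun ω => g (fun i => Z i ω)) y
      = ∑ z ∈ (Fintype.piFinset (fun i => Finset.univ.image (Z i))).filter
          (fun z => g z = y), ∏ i, massD p (Z i) (z i) := by
    unfold massD
    rw [sum_filter_tuple_eq p Z (fun z => g z = y)]
    exact Finset.sum_congr rfl fun z _ => indep' hZ z
  have hT1 : ∑ z ∈ Fintype.piFinset (fun i => Finset.univ.image (Z i)),
      ∏ i, massD p (Z i) (z i) = 1 := by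
    have h := sum_filter_tuple_eq p Z (fun _ => True)
    simp only [Finset.filter_true] at h
    rw [Finset.sum_congr rfl (fun z _ => indep' hZ z)] at h
    rw [← h]
    simpa using hp1
  have merge_mem : ∀ z ∈ Fintype.piFinset (fun i => Finset.univ.image (Z i)),
      ∀ z' ∈ Fintype.piFinset (fun i => Finset.univ.image (Z i)),
      (fun i => if i ∈ a then z i else z' i)
        ∈ Fintype.piFinset (fun i => Finset.univ.image (Z i)) := by
    intro z hz z' hz'
    rw [Fintype.mem_piFinset] at hz hz' ⊢
    intro i
    by_cases hi : i ∈ a <;> simp [hi, hz i, hz' i]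
  have jq_merge : ∀ z z' : Fin n → G,
      (∏ i, massD p (Z i) (if i ∈ a then z i else z' i))
        * ∏ i, massD p (Z i) (if i ∈ a then z' i else z i)
      = (∏ i, massD p (Z i) (z i)) * ∏ i, massD p (Z i) (z' i) := by
    intro z z'
    rw [← Finset.prod_mul_distrib, ← Finset.prod_mul_distrib]
    apply Finset.prod_congr rfl
    intro i _
    by_cases hi : i ∈ a <;> simp [hi, mul_comm]
  have hmain : (∑ z ∈ (Fintype.piFinset (fun i => Finset.univ.image (Z i))).filter
          (fun z => (f z, g z) = (x, y)), ∏ i, massD p (Z i) (z i))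
        * ∑ z ∈ Fintype.piFinset (fun i => Finset.univ.image (Z i)),
            ∏ i, massD p (Z i) (z i)
      = (∑ z ∈ (Fintype.piFinset (fun i => Finset.univ.image (Z i))).filter
          (fun z => f z = x), ∏ i, massD p (Z i) (z i))
        * ∑ z ∈ (Fintype.piFinset (fun i => Finset.univ.image (Z i))).filter
            (fun z => g z = y), ∏ i, massD p (Z i) (z i) := by
    rw [Finset.sum_mul_sum, Finset.sum_mul_sum, ← Finset.sum_product', ← Finset.sum_product']
    refine Finset.sum_nbij'
      (i := fun zz : (Fin n → G) × (Fin n → G) =>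
        ((fun i => if i ∈ a then zz.1 i else zz.2 i),
         (fun i => if i ∈ a then zz.2 i else zz.1 i)))
      (j := fun zz : (Fin n → G) × (Fin n → G) =>
        ((fun i => if i ∈ a then zz.1 i else zz.2 i),
         (fun i => if i ∈ a then zz.2 i else zz.1 i)))
      ?_ ?_ ?_ ?_ ?_
    · rintro ⟨z, z'⟩ hzz
      rw [Finset.mem_product, Finset.mem_filter] at hzz
      obtain ⟨⟨hzT, hfg⟩, hz'T⟩ := hzz
      rw [Prod.mk.injEq] at hfg
      rw [Finset.mem_product, Finset.mem_filter, Finset.mem_filter]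
      refine ⟨⟨merge_mem z hzT z' hz'T, ?_⟩, ⟨merge_mem z' hz'T z hzT, ?_⟩⟩
      · rw [← hfg.1]
        exact (hf _ _ (fun i hi => by simp [hi])).symm
      · rw [← hfg.2]
        exact (hg _ _ (fun i hi => by simp [hi])).symm
    · rintro ⟨w, w'⟩ hww
      rw [Finset.mem_product, Finset.mem_filter, Finset.mem_filter] at hww
      obtain ⟨⟨hwT, hfw⟩, ⟨hw'T, hgw'⟩⟩ := hww
      rw [Finset.mem_product, Finset.mem_filter]
      refine ⟨⟨merge_mem w hwT w' hw'T, ?_⟩, merge_mem w' hw'T w hwT⟩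
      rw [Prod.mk.injEq]
      constructor
      · rw [← hfw]
        exact (hf _ _ (fun i hi => by simp [hi])).symm
      · rw [← hgw']
        exact (hg _ _ (fun i hi => by simp [hi])).symm
    · rintro ⟨z, z'⟩ _
      rw [Prod.mk.injEq]
      constructor <;> funext i <;> by_cases hi : i ∈ a <;> simp [hi]
    · rintro ⟨w, w'⟩ _
      rw [Prod.mk.injEq]
      constructor <;> funext i <;> by_cases hi : i ∈ a <;> simp [hi]
    · rintro ⟨z, z'⟩ _
      exact (jq_merge z z').symm
  rw [hT1, mul_one] at hmain
  rw [hpair, hx, hy, hmain]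


end SubmodAux


open SubmodAux in
theorem SubmodAux.entropy_sum_submodular' {Ω G : Type*} [Fintype Ω] [AddCommGroup G] {n : ℕ}
    (p : Ω → ℝ) (hp0 : ∀ ω, 0 ≤ p ω) (hp1 : ∑ ω, p ω = 1)
    (Z : Fin n → Ω → G) (hZ : IndepRVs p Z) (s t : Finset (Fin n)) :
    ent p (fun ω => ∑ i ∈ s ∪ t, Z i ω) + ent p (fun ω => ∑ i ∈ s ∩ t, Z i ω)
      ≤ ent p (fun ω => ∑ i ∈ s, Z i ω) + ent p (fun ω => ∑ i ∈ t, Z i ω) := by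
  classical
  simp only [ent_eq_entD]
  -- decompositions of the sums
  have hS : ∀ ω, ∑ i ∈ s, Z i ω = (∑ i ∈ s \ t, Z i ω) + ∑ i ∈ s ∩ t, Z i ω := by
    intro ω
    rw [← Finset.sum_union (Finset.disjoint_sdiff_inter s t), Finset.sdiff_union_inter]
  have hU1 : ∀ ω, ∑ i ∈ s ∪ t, Z i ω = (∑ i ∈ s, Z i ω) + ∑ i ∈ t \ s, Z i ω := by
    intro ω
    rw [← Finset.sum_union Finset.disjoint_sdiff, Finset.union_sdiff_self_eq_union]
  have hU2 : ∀ ω, ∑ i ∈ s ∪ t, Z i ω = (∑ i ∈ s \ t, Z i ω) + ∑ i ∈ t, Z i ω := by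
    intro ω
    rw [← Finset.sum_union Finset.sdiff_disjoint, Finset.sdiff_union_self_eq_union]
  -- strong subadditivity applied to (W_s, W_{s\t}, W_{s∪t})
  have k : entD p (fun ω => (∑ i ∈ s, Z i ω, (∑ i ∈ s \ t, Z i ω, ∑ i ∈ s ∪ t, Z i ω)))
        + entD p (fun ω => ∑ i ∈ s ∪ t, Z i ω)
      ≤ entD p (fun ω => (∑ i ∈ s, Z i ω, ∑ i ∈ s ∪ t, Z i ω))
        + entD p (fun ω => (∑ i ∈ s \ t, Z i ω, ∑ i ∈ s ∪ t, Z i ω)) :=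
    strong_subadd p hp0 hp1
      (fun ω => (∑ i ∈ s, Z i ω, (∑ i ∈ s \ t, Z i ω, ∑ i ∈ s ∪ t, Z i ω)))
  -- rewrite the triple as an injective image of (W_{s\t}, W_{s∩t}, W_{t\s})
  have c1 : entD p (fun ω => (∑ i ∈ s, Z i ω, (∑ i ∈ s \ t, Z i ω, ∑ i ∈ s ∪ t, Z i ω)))
      = entD p (fun ω => (∑ i ∈ s \ t, Z i ω, (∑ i ∈ s ∩ t, Z i ω, ∑ i ∈ t \ s, Z i ω))) := by
    have hfun : (fun ω => (∑ i ∈ s, Z i ω, (∑ i ∈ s \ t, Z i ω, ∑ i ∈ s ∪ t, Z i ω)))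
        = fun ω => (fun v : G × G × G => (v.1 + v.2.1, (v.1, v.1 + v.2.1 + v.2.2)))
            ((∑ i ∈ s \ t, Z i ω, (∑ i ∈ s ∩ t, Z i ω, ∑ i ∈ t \ s, Z i ω))) := by
      funext ω
      show (∑ i ∈ s, Z i ω, (∑ i ∈ s \ t, Z i ω, ∑ i ∈ s ∪ t, Z i ω))
          = ((∑ i ∈ s \ t, Z i ω) + ∑ i ∈ s ∩ t, Z i ω,
             (∑ i ∈ s \ t, Z i ω,
              (∑ i ∈ s \ t, Z i ω) + (∑ i ∈ s ∩ t, Z i ω) + ∑ i ∈ t \ s, Z i ω))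
      rw [Prod.mk.injEq, Prod.mk.injEq]
      exact ⟨hS ω, rfl, by rw [hU1 ω, hS ω]⟩
    rw [hfun]
    exact entD_comp_inj p
      (fun ω => (∑ i ∈ s \ t, Z i ω, (∑ i ∈ s ∩ t, Z i ω, ∑ i ∈ t \ s, Z i ω)))
      (g := fun v : G × G × G => (v.1 + v.2.1, (v.1, v.1 + v.2.1 + v.2.2)))
      (by
        rintro ⟨a1, b1, c1⟩ ⟨a2, b2, c2⟩ h
        simp only [Prod.mk.injEq] at h ⊢
        obtain ⟨h1, h2, h3⟩ := h
        subst h2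
        have hb : b1 = b2 := by rwa [add_right_inj] at h1
        subst hb
        exact ⟨rfl, rfl, by rwa [add_right_inj] at h3⟩)
  -- independence of the three blocks
  have hfac1 : ∀ x y, massD p (fun ω => (∑ i ∈ s \ t, Z i ω,
        (∑ i ∈ s ∩ t, Z i ω, ∑ i ∈ t \ s, Z i ω))) (x, y)
      = massD p (fun ω => ∑ i ∈ s \ t, Z i ω) x
        * massD p (fun ω => (∑ i ∈ s ∩ t, Z i ω, ∑ i ∈ t \ s, Z i ω)) y :=
    fun x y => twoBlock hp1 hZ (s \ t) (fun z => ∑ i ∈ s \ t, z i)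
      (fun z => (∑ i ∈ s ∩ t, z i, ∑ i ∈ t \ s, z i))
      (fun z z' h => Finset.sum_congr rfl h)
      (fun z z' h => by
        rw [Prod.mk.injEq]
        constructor <;> refine Finset.sum_congr rfl (fun i hi => h i ?_) <;>
          simp only [Finset.mem_sdiff, Finset.mem_inter] at hi ⊢ <;> tauto)
      x y
  have hfac2 : ∀ x y, massD p (fun ω => (∑ i ∈ s ∩ t, Z i ω, ∑ i ∈ t \ s, Z i ω)) (x, y)
      = massD p (fun ω => ∑ i ∈ s ∩ t, Z i ω) x
        * massD p (fun ω => ∑ i ∈ t \ s, Z i ω) y :=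
    fun x y => twoBlock hp1 hZ (s ∩ t) (fun z => ∑ i ∈ s ∩ t, z i)
      (fun z => ∑ i ∈ t \ s, z i)
      (fun z z' h => Finset.sum_congr rfl h)
      (fun z z' h => Finset.sum_congr rfl (fun i hi => h i (by
        simp only [Finset.mem_sdiff, Finset.mem_inter] at hi ⊢; tauto)))
      x y
  have c2 : entD p (fun ω => (∑ i ∈ s \ t, Z i ω,
        (∑ i ∈ s ∩ t, Z i ω, ∑ i ∈ t \ s, Z i ω)))
      = entD p (fun ω => ∑ i ∈ s \ t, Z i ω)
        + (entD p (fun ω => ∑ i ∈ s ∩ t, Z i ω)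
          + entD p (fun ω => ∑ i ∈ t \ s, Z i ω)) := by
    rw [entD_pair_indep p hp1 _ _ hfac1, entD_pair_indep p hp1 _ _ hfac2]
  -- the two pair terms
  have hfac3 : ∀ x y, massD p (fun ω => (∑ i ∈ s, Z i ω, ∑ i ∈ t \ s, Z i ω)) (x, y)
      = massD p (fun ω => ∑ i ∈ s, Z i ω) x
        * massD p (fun ω => ∑ i ∈ t \ s, Z i ω) y :=
    fun x y => twoBlock hp1 hZ s (fun z => ∑ i ∈ s, z i) (fun z => ∑ i ∈ t \ s, z i)
      (fun z z' h => Finset.sum_congr rfl h)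
      (fun z z' h => Finset.sum_congr rfl (fun i hi => h i (by
        simp only [Finset.mem_sdiff] at hi; exact hi.2)))
      x y
  have hfac4 : ∀ x y, massD p (fun ω => (∑ i ∈ s \ t, Z i ω, ∑ i ∈ t, Z i ω)) (x, y)
      = massD p (fun ω => ∑ i ∈ s \ t, Z i ω) x
        * massD p (fun ω => ∑ i ∈ t, Z i ω) y :=
    fun x y => twoBlock hp1 hZ (s \ t) (fun z => ∑ i ∈ s \ t, z i) (fun z => ∑ i ∈ t, z i)
      (fun z z' h => Finset.sum_congr rfl h)
      (fun z z' h => Finset.sum_congr rfl (fun i hi => h i (by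
        simp only [Finset.mem_sdiff]; tauto)))
      x y
  have g2inj : Function.Injective (fun v : G × G => (v.1, v.1 + v.2)) := by
    rintro ⟨a1, b1⟩ ⟨a2, b2⟩ h
    simp only [Prod.mk.injEq] at h ⊢
    obtain ⟨h1, h2⟩ := h
    subst h1
    exact ⟨rfl, by rwa [add_right_inj] at h2⟩
  have c3 : entD p (fun ω => (∑ i ∈ s, Z i ω, ∑ i ∈ s ∪ t, Z i ω))
      = entD p (fun ω => ∑ i ∈ s, Z i ω) + entD p (fun ω => ∑ i ∈ t \ s, Z i ω) := by
    have hfun : (fun ω => (∑ i ∈ s, Z i ω, ∑ i ∈ s ∪ t, Z i ω))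
        = fun ω => (fun v : G × G => (v.1, v.1 + v.2))
            ((∑ i ∈ s, Z i ω, ∑ i ∈ t \ s, Z i ω)) := by
      funext ω
      show _ = (_, _ + _)
      rw [Prod.mk.injEq]
      exact ⟨rfl, hU1 ω⟩
    rw [hfun,
      entD_comp_inj p (fun ω => (∑ i ∈ s, Z i ω, ∑ i ∈ t \ s, Z i ω))
        (g := fun v : G × G => (v.1, v.1 + v.2)) g2inj,
      entD_pair_indep p hp1 _ _ hfac3]
  have c4 : entD p (fun ω => (∑ i ∈ s \ t, Z i ω, ∑ i ∈ s ∪ t, Z i ω))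
      = entD p (fun ω => ∑ i ∈ s \ t, Z i ω) + entD p (fun ω => ∑ i ∈ t, Z i ω) := by
    have hfun : (fun ω => (∑ i ∈ s \ t, Z i ω, ∑ i ∈ s ∪ t, Z i ω))
        = fun ω => (fun v : G × G => (v.1, v.1 + v.2))
            ((∑ i ∈ s \ t, Z i ω, ∑ i ∈ t, Z i ω)) := by
      funext ω
      show _ = (_, _ + _)
      rw [Prod.mk.injEq]
      exact ⟨rfl, hU2 ω⟩
    rw [hfun,
      entD_comp_inj p (fun ω => (∑ i ∈ s \ t, Z i ω, ∑ i ∈ t, Z i ω))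
        (g := fun v : G × G => (v.1, v.1 + v.2)) g2inj,
      entD_pair_indep p hp1 _ _ hfac4]
  rw [c1, c2] at k
  rw [c3, c4] at k
  linarith

/-- Submodularity of the entropy of subset-sums of independent random variables in
an abelian group: $H(Z^+_{s\cup t}) + H(Z^+_{s\cap t}) \le H(Z^+_s) + H(Z^+_t)$. -/
theorem entropy_sum_submodular {Ω G : Type*} [Fintype Ω] [AddCommGroup G] {n : ℕ}
    (p : Ω → ℝ) (hp : IsProbMass p) (Z : Fin n → Ω → G) (hZ : IndepRVs p Z)
    (s t : Finset (Fin n)) :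
    ent p (fun ω => ∑ i ∈ s ∪ t, Z i ω) + ent p (fun ω => ∑ i ∈ s ∩ t, Z i ω)
      ≤ ent p (fun ω => ∑ i ∈ s, Z i ω) + ent p (fun ω => ∑ i ∈ t, Z i ω) := by
  exact SubmodAux.entropy_sum_submodular' p hp.1 hp.2 Z hZ s t
end

section
/- Let G be an abelian group, Z1,…,Zn independent discrete random variables in G, C a collection of subsets of [n], and α: C → ℝ≥0 a fractional covering (meaning for every i ∈ [n], ∑_{s∈C, i∈s} α_s ≥ 1). Then H(Z1+⋯+Zn) ≤ ∑_{s∈C} α_s · H(∑_{i∈s} Z_i). -/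
open Finset

namespace FC
variable {Ω S T U V : Type*} [Fintype Ω]

noncomputable def dst (p : Ω → ℝ) (X : Ω → S) (y : S) : ℝ :=
  letI := Classical.decEq S
  ∑ ω ∈ Finset.univ.filter (fun ω => X ω = y), p ω

lemma dst_def [DecidableEq S] (p : Ω → ℝ) (X : Ω → S) (y : S) :
    dst p X y = ∑ ω ∈ Finset.univ.filter (fun ω => X ω = y), p ω := by
  unfold dst; congr!

lemma ent_eq [DecidableEq S] (p : Ω → ℝ) (X : Ω → S) :
    ent p X = ∑ y ∈ Finset.univ.image X, Real.negMulLog (dst p X y) := by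
  unfold ent; congr!

lemma dst_nonneg {p : Ω → ℝ} (hp : ∀ ω, 0 ≤ p ω) (X : Ω → S) (y : S) : 0 ≤ dst p X y := by
  classical
  rw [dst_def]; exact Finset.sum_nonneg fun ω _ => hp ω

lemma dst_eq_zero [DecidableEq S] {p : Ω → ℝ} {X : Ω → S} {y : S}
    (h : y ∉ Finset.univ.image X) : dst p X y = 0 := by
  rw [dst_def, Finset.filter_false_of_mem, Finset.sum_empty]
  intro ω _ hω
  exact h (hω ▸ Finset.mem_image_of_mem X (Finset.mem_univ ω))


lemma sum_fiber [DecidableEq S] (p : Ω → ℝ) (X : Ω → S) (Q : Ω → Prop) [DecidablePred Q] :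
    ∑ ω ∈ Finset.univ.filter Q, p ω
      = ∑ s ∈ Finset.univ.image X, ∑ ω ∈ Finset.univ.filter (fun ω => Q ω ∧ X ω = s), p ω := by
  rw [← Finset.sum_fiberwise_of_maps_to (g := X) (t := Finset.univ.image X)
    (fun ω _ => Finset.mem_image_of_mem X (Finset.mem_univ ω)) p]
  exact Finset.sum_congr rfl fun s _ => by rw [Finset.filter_filter]

lemma ent_eq_superset [DecidableEq S] (p : Ω → ℝ) (X : Ω → S) {T : Finset S}
    (h : Finset.univ.image X ⊆ T) :
    ent p X = ∑ y ∈ T, Real.negMulLog (dst p X y) := by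
  rw [ent_eq]
  exact Finset.sum_subset h fun y _ hy => by rw [dst_eq_zero hy, Real.negMulLog_zero]

lemma sum_dst [DecidableEq S] (p : Ω → ℝ) (X : Ω → S) {T : Finset S}
    (h : Finset.univ.image X ⊆ T) : ∑ y ∈ T, dst p X y = ∑ ω, p ω := by
  calc ∑ y ∈ T, dst p X y = ∑ y ∈ Finset.univ.image X, dst p X y :=
        (Finset.sum_subset h fun y _ hy => dst_eq_zero hy).symm
    _ = ∑ y ∈ Finset.univ.image X, ∑ ω ∈ Finset.univ.filter (fun ω => X ω = y), p ω :=
        Finset.sum_congr rfl fun y _ => dst_def p X y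
    _ = ∑ ω, p ω := Finset.sum_fiberwise_of_maps_to
        (fun ω _ => Finset.mem_image_of_mem X (Finset.mem_univ ω)) p

lemma dst_comp [DecidableEq S] [DecidableEq U] (p : Ω → ℝ) (X : Ω → S) (g : S → U) (u : U) :
    dst p (fun ω => g (X ω)) u
      = ∑ s ∈ (Finset.univ.image X).filter (fun s => g s = u), dst p X s := by
  rw [dst_def, sum_fiber p X (fun ω => g (X ω) = u), Finset.sum_filter]
  apply Finset.sum_congr rfl
  intro s _
  by_cases hgs : g s = u
  · rw [if_pos hgs, dst_def]
    apply Finset.sum_congr _ fun _ _ => rfl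
    ext ω
    simp only [Finset.mem_filter, Finset.mem_univ, true_and]
    exact ⟨fun h2 => h2.2, fun h2 => ⟨by rw [h2, hgs], h2⟩⟩
  · rw [if_neg hgs, Finset.filter_false_of_mem, Finset.sum_empty]
    rintro ω _ ⟨h1, h2⟩
    exact hgs (h2 ▸ h1)

lemma dst_comp_inj [DecidableEq S] [DecidableEq U] {f : S → U} (hf : Function.Injective f)
    (p : Ω → ℝ) (X : Ω → S) (y : S) :
    dst p (fun ω => f (X ω)) (f y) = dst p X y := by
  rw [dst_def, dst_def]
  apply Finset.sum_congr _ fun _ _ => rfl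
  ext ω
  simp [hf.eq_iff]

lemma ent_comp_inj {f : S → U} (hf : Function.Injective f) (p : Ω → ℝ) (X : Ω → S) :
    ent p (fun ω => f (X ω)) = ent p X := by
  classical
  rw [ent_eq, ent_eq]
  have himg : Finset.univ.image (fun ω => f (X ω)) = (Finset.univ.image X).image f := by
    rw [Finset.image_image]; rfl
  rw [himg, Finset.sum_image fun a _ b _ h => hf h]
  exact Finset.sum_congr rfl fun y _ => by rw [dst_comp_inj hf]

def pairInd (p : Ω → ℝ) (X : Ω → S) (Y : Ω → T) : Prop :=
  ∀ x y, dst p (fun ω => (X ω, Y ω)) (x, y) = dst p X x * dst p Y y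

lemma image_pair_subset [DecidableEq S] [DecidableEq T] (X : Ω → S) (Y : Ω → T) :
    Finset.univ.image (fun ω => (X ω, Y ω)) ⊆ Finset.univ.image X ×ˢ Finset.univ.image Y := by
  intro z hz
  simp only [Finset.mem_image, Finset.mem_univ, true_and] at hz
  obtain ⟨ω, hω⟩ := hz
  rw [← hω, Finset.mem_product]
  exact ⟨Finset.mem_image_of_mem X (Finset.mem_univ ω), Finset.mem_image_of_mem Y (Finset.mem_univ ω)⟩

lemma ent_pair_of_pairInd {p : Ω → ℝ} (hp : IsProbMass p) {X : Ω → S} {Y : Ω → T}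
    (h : pairInd p X Y) :
    ent p (fun ω => (X ω, Y ω)) = ent p X + ent p Y := by
  classical
  have hX1 : ∑ x ∈ Finset.univ.image X, dst p X x = 1 := by
    rw [sum_dst p X (subset_refl _), hp.2]
  have hY1 : ∑ y ∈ Finset.univ.image Y, dst p Y y = 1 := by
    rw [sum_dst p Y (subset_refl _), hp.2]
  rw [ent_eq_superset p _ (image_pair_subset X Y), Finset.sum_product]
  have : ∀ x ∈ Finset.univ.image X, ∀ y ∈ Finset.univ.image Y,
      Real.negMulLog (dst p (fun ω => (X ω, Y ω)) (x, y))
        = dst p Y y * Real.negMulLog (dst p X x) + dst p X x * Real.negMulLog (dst p Y y) := by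
    intro x _ y _
    rw [h x y, Real.negMulLog_mul]
  calc ∑ x ∈ Finset.univ.image X, ∑ y ∈ Finset.univ.image Y,
        Real.negMulLog (dst p (fun ω => (X ω, Y ω)) (x, y))
      = ∑ x ∈ Finset.univ.image X, ∑ y ∈ Finset.univ.image Y,
        (dst p Y y * Real.negMulLog (dst p X x) + dst p X x * Real.negMulLog (dst p Y y)) :=
        Finset.sum_congr rfl fun x hx => Finset.sum_congr rfl fun y hy => this x hx y hy
    _ = ∑ x ∈ Finset.univ.image X,
        ((∑ y ∈ Finset.univ.image Y, dst p Y y) * Real.negMulLog (dst p X x)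
          + dst p X x * ∑ y ∈ Finset.univ.image Y, Real.negMulLog (dst p Y y)) := by
        apply Finset.sum_congr rfl
        intro x _
        rw [Finset.sum_add_distrib, Finset.sum_mul, Finset.mul_sum]
    _ = ent p X + ent p Y := by
        simp_rw [hY1, one_mul]
        rw [Finset.sum_add_distrib, ← Finset.sum_mul, hX1, one_mul, ent_eq p X, ent_eq p Y]


noncomputable def cnd (p : Ω → ℝ) (Y : Ω → T) (y : T) : Ω → ℝ :=
  letI := Classical.decEq T
  fun ω => if Y ω = y then p ω / dst p Y y else 0

lemma cnd_def [DecidableEq T] (p : Ω → ℝ) (Y : Ω → T) (y : T) (ω : Ω) :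
    cnd p Y y ω = if Y ω = y then p ω / dst p Y y else 0 := by
  unfold cnd; congr!

lemma cnd_nonneg {p : Ω → ℝ} (hp : ∀ ω, 0 ≤ p ω) (Y : Ω → T) (y : T) (ω : Ω) :
    0 ≤ cnd p Y y ω := by
  classical
  rw [cnd_def]
  split
  · exact div_nonneg (hp ω) (dst_nonneg hp Y y)
  · exact le_refl 0

lemma dst_cnd [DecidableEq S] [DecidableEq T] (p : Ω → ℝ) (X : Ω → S) (Y : Ω → T) (y : T) (x : S) :
    dst (cnd p Y y) X x = dst p (fun ω => (X ω, Y ω)) (x, y) / dst p Y y := by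
  classical
  rw [dst_def, dst_def]
  have : ∀ ω ∈ Finset.univ.filter (fun ω => X ω = x), cnd p Y y ω
      = if Y ω = y then p ω / dst p Y y else 0 := fun ω _ => cnd_def p Y y ω
  rw [Finset.sum_congr rfl this, ← Finset.sum_filter, Finset.filter_filter, Finset.sum_div]
  apply Finset.sum_congr _ fun _ _ => rfl
  ext ω
  simp [Prod.ext_iff, and_comm]

lemma cnd_pmf {p : Ω → ℝ} (hp : IsProbMass p) {Y : Ω → T} {y : T} (hy : dst p Y y ≠ 0) :
    IsProbMass (cnd p Y y) := by
  classical
  refine ⟨cnd_nonneg hp.1 Y y, ?_⟩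
  have : ∀ ω ∈ (Finset.univ : Finset Ω), cnd p Y y ω
      = if Y ω = y then p ω / dst p Y y else 0 := fun ω _ => cnd_def p Y y ω
  rw [Finset.sum_congr rfl this, ← Finset.sum_filter, ← Finset.sum_div]
  have hd : (∑ ω ∈ Finset.univ.filter (fun ω => Y ω = y), p ω) = dst p Y y :=
    (dst_def p Y y).symm
  rw [hd, div_self hy]

lemma dst_fiber [DecidableEq S] [DecidableEq T] (p : Ω → ℝ) (X : Ω → S) (Y : Ω → T) (y : T) :
    ∑ x ∈ Finset.univ.image X, dst p (fun ω => (X ω, Y ω)) (x, y) = dst p Y y := by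
  rw [dst_def, sum_fiber p X (fun ω => Y ω = y)]
  apply Finset.sum_congr rfl
  intro x _
  rw [dst_def]
  apply Finset.sum_congr _ fun _ _ => rfl
  ext ω
  simp [Prod.ext_iff, and_comm]

lemma dst_pair_eq_zero [DecidableEq S] [DecidableEq T] {p : Ω → ℝ} (hp : ∀ ω, 0 ≤ p ω)
    (X : Ω → S) (Y : Ω → T) {y : T} (hy : dst p Y y = 0) (x : S) :
    dst p (fun ω => (X ω, Y ω)) (x, y) = 0 := by
  have h1 : dst p (fun ω => (X ω, Y ω)) (x, y) ≤ dst p Y y := by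
    rw [dst_def, dst_def]
    apply Finset.sum_le_sum_of_subset_of_nonneg
    · intro ω hω
      simp only [Finset.mem_filter, Finset.mem_univ, true_and, Prod.ext_iff] at hω ⊢
      exact hω.2
    · exact fun ω _ _ => hp ω
  have h2 := dst_nonneg hp (fun ω => (X ω, Y ω)) (x, y)
  linarith [hy ▸ h1]

lemma chain_rule [DecidableEq S] [DecidableEq T] {p : Ω → ℝ} (hp : ∀ ω, 0 ≤ p ω)
    (X : Ω → S) (Y : Ω → T) :
    ent p (fun ω => (X ω, Y ω))
      = ent p Y + ∑ y ∈ Finset.univ.image Y, dst p Y y * ent (cnd p Y y) X := by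
  rw [ent_eq_superset p _ (image_pair_subset X Y), Finset.sum_product_right, ent_eq p Y,
    ← Finset.sum_add_distrib]
  apply Finset.sum_congr rfl
  intro y _
  by_cases hy : dst p Y y = 0
  · have hz : ∀ x ∈ Finset.univ.image X,
        Real.negMulLog (dst p (fun ω => (X ω, Y ω)) (x, y)) = 0 := by
      intro x _
      rw [dst_pair_eq_zero hp X Y hy x, Real.negMulLog_zero]
    rw [Finset.sum_congr rfl hz, Finset.sum_const, smul_zero, hy, Real.negMulLog_zero,
      zero_mul, add_zero]
  · have hq : ∀ x ∈ Finset.univ.image X,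
        Real.negMulLog (dst p (fun ω => (X ω, Y ω)) (x, y))
          = dst (cnd p Y y) X x * Real.negMulLog (dst p Y y)
            + dst p Y y * Real.negMulLog (dst (cnd p Y y) X x) := by
      intro x _
      have : dst p (fun ω => (X ω, Y ω)) (x, y) = dst p Y y * dst (cnd p Y y) X x := by
        rw [dst_cnd p X Y y x]
        field_simp
      rw [this, Real.negMulLog_mul]
    rw [Finset.sum_congr rfl hq, Finset.sum_add_distrib, ← Finset.sum_mul, ← Finset.mul_sum]
    have hq1 : ∑ x ∈ Finset.univ.image X, dst (cnd p Y y) X x = 1 := by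
      have := dst_fiber p X Y y
      have h2 : ∀ x ∈ Finset.univ.image X, dst (cnd p Y y) X x
          = dst p (fun ω => (X ω, Y ω)) (x, y) / dst p Y y := fun x _ => dst_cnd p X Y y x
      rw [Finset.sum_congr rfl h2, ← Finset.sum_div, this, div_self hy]
    rw [hq1, one_mul, ent_eq (cnd p Y y) X]

lemma dst_fiber' [DecidableEq S] [DecidableEq T] (p : Ω → ℝ) (X : Ω → S) (Y : Ω → T) (x : S) :
    ∑ y ∈ Finset.univ.image Y, dst p (fun ω => (X ω, Y ω)) (x, y) = dst p X x := by
  rw [dst_def, sum_fiber p Y (fun ω => X ω = x)]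
  apply Finset.sum_congr rfl
  intro y _
  rw [dst_def]
  apply Finset.sum_congr _ fun _ _ => rfl
  ext ω
  simp [Prod.ext_iff]

lemma cond_reduce [DecidableEq S] [DecidableEq T] {p : Ω → ℝ} (hp : IsProbMass p)
    (X : Ω → S) (Y : Ω → T) :
    ∑ y ∈ Finset.univ.image Y, dst p Y y * ent (cnd p Y y) X ≤ ent p X := by
  have hmix : ∀ x, dst p X x
      = ∑ y ∈ Finset.univ.image Y, dst p Y y * dst (cnd p Y y) X x := by
    intro x
    have h1 : ∀ y ∈ Finset.univ.image Y, dst p Y y * dst (cnd p Y y) X x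
        = dst p (fun ω => (X ω, Y ω)) (x, y) := by
      intro y _
      by_cases hy : dst p Y y = 0
      · rw [hy, zero_mul, dst_pair_eq_zero hp.1 X Y hy x]
      · rw [dst_cnd p X Y y x, mul_div_cancel₀ _ hy]
    rw [Finset.sum_congr rfl h1, dst_fiber']
  calc ∑ y ∈ Finset.univ.image Y, dst p Y y * ent (cnd p Y y) X
      = ∑ y ∈ Finset.univ.image Y, ∑ x ∈ Finset.univ.image X,
          dst p Y y * Real.negMulLog (dst (cnd p Y y) X x) := by
        apply Finset.sum_congr rfl
        intro y _
        rw [ent_eq (cnd p Y y) X, Finset.mul_sum]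
    _ = ∑ x ∈ Finset.univ.image X, ∑ y ∈ Finset.univ.image Y,
          dst p Y y * Real.negMulLog (dst (cnd p Y y) X x) := Finset.sum_comm
    _ ≤ ∑ x ∈ Finset.univ.image X, Real.negMulLog (dst p X x) := by
        apply Finset.sum_le_sum
        intro x _
        have hj := Real.concaveOn_negMulLog.le_map_sum (t := Finset.univ.image Y)
          (w := fun y => dst p Y y) (p := fun y => dst (cnd p Y y) X x)
          (fun y _ => dst_nonneg hp.1 Y y)
          (by rw [sum_dst p Y (subset_refl _), hp.2])
          (fun y _ => Set.mem_Ici.mpr (dst_nonneg (cnd_nonneg hp.1 Y y) X x))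
        simp only [smul_eq_mul] at hj
        rw [hmix x]
        exact hj
    _ = ent p X := (ent_eq p X).symm


lemma ent_pair_le [DecidableEq S] [DecidableEq T] {p : Ω → ℝ} (hp : IsProbMass p)
    (X : Ω → S) (Y : Ω → T) :
    ent p (fun ω => (X ω, Y ω)) ≤ ent p X + ent p Y := by
  rw [chain_rule hp.1 X Y]
  linarith [cond_reduce hp X Y]

lemma cmi [DecidableEq S] [DecidableEq T] [DecidableEq U] {p : Ω → ℝ} (hp : IsProbMass p)
    (X : Ω → S) (A : Ω → T) (Cc : Ω → U) :
    ent p (fun ω => ((X ω, A ω), Cc ω)) + ent p Cc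
      ≤ ent p (fun ω => (X ω, Cc ω)) + ent p (fun ω => (A ω, Cc ω)) := by
  rw [chain_rule hp.1 (fun ω => (X ω, A ω)) Cc, chain_rule hp.1 X Cc, chain_rule hp.1 A Cc]
  have hterm : ∀ c ∈ Finset.univ.image Cc,
      dst p Cc c * ent (cnd p Cc c) (fun ω => (X ω, A ω))
        ≤ dst p Cc c * ent (cnd p Cc c) X + dst p Cc c * ent (cnd p Cc c) A := by
    intro c _
    by_cases hc : dst p Cc c = 0
    · rw [hc]; simp
    · rw [← mul_add]
      exact mul_le_mul_of_nonneg_left (ent_pair_le (cnd_pmf hp hc) X A) (dst_nonneg hp.1 Cc c)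
  have hsum := Finset.sum_le_sum hterm
  rw [Finset.sum_add_distrib] at hsum
  linarith

lemma pairInd.comp {p : Ω → ℝ} {X : Ω → S} {Y : Ω → T} (h : pairInd p X Y)
    (f : S → U) (g : T → V) : pairInd p (fun ω => f (X ω)) (fun ω => g (Y ω)) := by
  classical
  intro u v
  have key : dst p (fun ω => (f (X ω), g (Y ω))) (u, v)
      = ∑ z ∈ ((Finset.univ.image X ×ˢ Finset.univ.image Y).filter
          (fun z => Prod.map f g z = (u, v))), dst p (fun ω => (X ω, Y ω)) z := by
    rw [show (fun ω => (f (X ω), g (Y ω)))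
        = (fun ω => Prod.map f g ((fun ω' => (X ω', Y ω')) ω)) from rfl,
      dst_comp p (fun ω => (X ω, Y ω)) (Prod.map f g) (u, v)]
    apply Finset.sum_subset (Finset.filter_subset_filter _ (image_pair_subset X Y))
    intro z hz hz2
    exact dst_eq_zero fun hzim =>
      hz2 (Finset.mem_filter.mpr ⟨hzim, (Finset.mem_filter.mp hz).2⟩)
  rw [key]
  have hfilter : ((Finset.univ.image X ×ˢ Finset.univ.image Y).filter
      (fun z => Prod.map f g z = (u, v)))
      = (Finset.univ.image X).filter (fun s => f s = u)
          ×ˢ (Finset.univ.image Y).filter (fun t => g t = v) := by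
    ext z
    simp only [Finset.mem_filter, Finset.mem_product, Prod.map, Prod.ext_iff]
    tauto
  rw [hfilter, Finset.sum_product, dst_comp p X f u, dst_comp p Y g v, Finset.sum_mul_sum]
  exact Finset.sum_congr rfl fun s _ => Finset.sum_congr rfl fun t _ => h s t

variable {G : Type*} [AddCommGroup G]

lemma ent_mono {p : Ω → ℝ} (hp : IsProbMass p) {X Y : Ω → G} (h : pairInd p Y X) :
    ent p Y ≤ ent p (fun ω => X ω + Y ω) := by
  classical
  have hf : Function.Injective (fun z : G × G => (z.2 + z.1, z.2)) := by
    intro a b hab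
    simp only [Prod.ext_iff] at hab
    obtain ⟨h1, h2⟩ := hab
    rw [h2] at h1
    exact Prod.ext (add_left_cancel h1) h2
  have e1 : ent p (fun ω => (X ω + Y ω, X ω)) = ent p (fun ω => (Y ω, X ω)) :=
    ent_comp_inj hf p (fun ω => (Y ω, X ω))
  have e2 : ent p (fun ω => (Y ω, X ω)) = ent p Y + ent p X := ent_pair_of_pairInd hp h
  have e3 := ent_pair_le hp (fun ω => X ω + Y ω) X
  rw [e1, e2] at e3
  linarith

lemma submod {p : Ω → ℝ} (hp : IsProbMass p) {X Y V : Ω → G}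
    (h1 : pairInd p (fun ω => (X ω, Y ω)) V)
    (h2 : pairInd p X (fun ω => (Y ω, V ω)))
    (h3 : pairInd p X Y) :
    ent p (fun ω => X ω + Y ω + V ω) + ent p Y
      ≤ ent p (fun ω => X ω + Y ω) + ent p (fun ω => Y ω + V ω) := by
  classical
  have hinj1 : Function.Injective (fun z : (G × G) × G => (z.1, z.1.2 + z.2)) := by
    intro a b hab
    simp only [Prod.ext_iff] at hab
    obtain ⟨h1', h2'⟩ := hab
    rw [h1'.2] at h2'
    exact Prod.ext (Prod.ext h1'.1 h1'.2) (add_left_cancel h2')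
  have hinj2 : Function.Injective (fun z : G × G => (z.1, z.1 + z.2)) := by
    intro a b hab
    simp only [Prod.ext_iff] at hab
    obtain ⟨h1', h2'⟩ := hab
    rw [h1'] at h2'
    exact Prod.ext h1' (add_left_cancel h2')
  have key := cmi hp X (fun ω => X ω + Y ω) (fun ω => X ω + Y ω + V ω)
  have e1 : ent p (fun ω => ((X ω, X ω + Y ω), X ω + Y ω + V ω))
      = ent p (fun ω => ((X ω, X ω + Y ω), V ω)) :=
    ent_comp_inj hinj1 p (fun ω => ((X ω, X ω + Y ω), V ω))
  have hindXA : pairInd p (fun ω => (X ω, X ω + Y ω)) V :=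
    h1.comp (fun z : G × G => (z.1, z.1 + z.2)) id
  have e1b : ent p (fun ω => ((X ω, X ω + Y ω), V ω))
      = (ent p X + ent p Y) + ent p V := by
    rw [ent_pair_of_pairInd hp hindXA]
    congr 1
    rw [ent_comp_inj hinj2 p (fun ω => (X ω, Y ω)), ent_pair_of_pairInd hp h3]
  have hindAV : pairInd p (fun ω => X ω + Y ω) V :=
    h1.comp (fun z : G × G => z.1 + z.2) id
  have e2 : ent p (fun ω => (X ω + Y ω, X ω + Y ω + V ω))
      = ent p (fun ω => X ω + Y ω) + ent p V := by
    have := ent_comp_inj hinj2 p (fun ω => (X ω + Y ω, V ω))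
    rw [show ent p (fun ω => (X ω + Y ω, X ω + Y ω + V ω))
        = ent p (fun ω => (X ω + Y ω, V ω)) from this, ent_pair_of_pairInd hp hindAV]
  have hindXB : pairInd p X (fun ω => Y ω + V ω) :=
    h2.comp id (fun z : G × G => z.1 + z.2)
  have e3 : ent p (fun ω => (X ω, X ω + Y ω + V ω))
      = ent p X + ent p (fun ω => Y ω + V ω) := by
    have hC : (fun ω => (X ω, X ω + Y ω + V ω))
        = fun ω => (X ω, X ω + (Y ω + V ω)) := by
      funext ω
      rw [add_assoc]
    rw [hC, ent_comp_inj hinj2 p (fun ω => (X ω, Y ω + V ω)), ent_pair_of_pairInd hp hindXB]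
  rw [e1, e1b, e2, e3] at key
  linarith


lemma ent_const {p : Ω → ℝ} (hp : IsProbMass p) (c : S) : ent p (fun _ => c) = 0 := by
  classical
  rcases isEmpty_or_nonempty Ω with h | h
  · rw [ent_eq]
    simp [Finset.univ_eq_empty]
  · rw [ent_eq]
    have himg : (Finset.univ : Finset Ω).image (fun _ => c) = {c} :=
      Finset.image_const Finset.univ_nonempty c
    rw [himg, Finset.sum_singleton, dst_def]
    have hfil : Finset.univ.filter (fun _ : Ω => c = c) = Finset.univ :=
      Finset.filter_true_of_mem fun _ _ => rfl
    rw [hfil, hp.2, Real.negMulLog_one]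

variable {n : ℕ}

lemma marg [DecidableEq G] {p : Ω → ℝ} (hp : IsProbMass p) {Z : Fin n → Ω → G}
    (hZ : IndepRVs p Z) :
    ∀ (a : Finset (Fin n)) (z : Fin n → G),
      ∑ ω ∈ Finset.univ.filter (fun ω => ∀ i ∈ a, Z i ω = z i), p ω
        = ∏ i ∈ a, dst p (Z i) (z i) := by
  suffices key : ∀ (m : ℕ) (a : Finset (Fin n)), aᶜ.card = m → ∀ z : Fin n → G,
      ∑ ω ∈ Finset.univ.filter (fun ω => ∀ i ∈ a, Z i ω = z i), p ω
        = ∏ i ∈ a, dst p (Z i) (z i) by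
    intro a z
    exact key _ a rfl z
  intro m
  induction m with
  | zero =>
    intro a ha z
    have hau : a = Finset.univ := by
      rwa [Finset.card_eq_zero, Finset.compl_eq_empty_iff] at ha
    subst hau
    have h2 : ∀ i ∈ (Finset.univ : Finset (Fin n)), dst p (Z i) (z i)
        = ∑ ω ∈ Finset.univ.filter (fun ω => Z i ω = z i), p ω :=
      fun i _ => dst_def p (Z i) (z i)
    rw [Finset.prod_congr rfl h2]
    have h3 := hZ z
    calc ∑ ω ∈ Finset.univ.filter (fun ω => ∀ i ∈ Finset.univ, Z i ω = z i), p ω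
        = ∑ ω ∈ Finset.univ.filter (fun ω => ∀ i, Z i ω = z i), p ω := by
          apply Finset.sum_congr _ fun _ _ => rfl
          ext ω
          simp
      _ = ∏ i ∈ Finset.univ, ∑ ω ∈ Finset.univ.filter (fun ω => Z i ω = z i), p ω := by
          convert h3 using 2 <;> congr!
  | succ m ih =>
    intro a ha z
    obtain ⟨j, hj⟩ : aᶜ.Nonempty := Finset.card_pos.mp (ha ▸ Nat.succ_pos m)
    have hja : j ∉ a := Finset.mem_compl.mp hj
    have ha' : (insert j a)ᶜ.card = m := by
      rw [Finset.compl_insert, Finset.card_erase_of_mem hj, ha]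
      omega
    rw [sum_fiber p (Z j) (fun ω => ∀ i ∈ a, Z i ω = z i)]
    have hfib : ∀ g ∈ Finset.univ.image (Z j),
        (Finset.univ.filter fun ω => (∀ i ∈ a, Z i ω = z i) ∧ Z j ω = g)
          = Finset.univ.filter fun ω => ∀ i ∈ insert j a, Z i ω = Function.update z j g i := by
      intro g _
      ext ω
      simp only [Finset.mem_filter, Finset.mem_univ, true_and, Finset.mem_insert]
      constructor
      · rintro ⟨h1, h2⟩ i hi
        rcases hi with rfl | hi
        · rw [Function.update_self]; exact h2
        · rw [Function.update_of_ne (ne_of_mem_of_not_mem hi hja)]; exact h1 i hi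
      · intro hh
        refine ⟨fun i hi => ?_, ?_⟩
        · have := hh i (Or.inr hi)
          rwa [Function.update_of_ne (ne_of_mem_of_not_mem hi hja)] at this
        · have := hh j (Or.inl rfl)
          rwa [Function.update_self] at this
    calc ∑ g ∈ Finset.univ.image (Z j),
          ∑ ω ∈ Finset.univ.filter (fun ω => (∀ i ∈ a, Z i ω = z i) ∧ Z j ω = g), p ω
        = ∑ g ∈ Finset.univ.image (Z j),
          ∑ ω ∈ Finset.univ.filter
            (fun ω => ∀ i ∈ insert j a, Z i ω = Function.update z j g i), p ω :=
          Finset.sum_congr rfl fun g hg => by rw [hfib g hg]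
      _ = ∑ g ∈ Finset.univ.image (Z j),
            ∏ i ∈ insert j a, dst p (Z i) (Function.update z j g i) :=
          Finset.sum_congr rfl fun g _ => ih (insert j a) ha' (Function.update z j g)
      _ = ∑ g ∈ Finset.univ.image (Z j), dst p (Z j) g * ∏ i ∈ a, dst p (Z i) (z i) := by
          apply Finset.sum_congr rfl
          intro g _
          rw [Finset.prod_insert hja, Function.update_self]
          congr 1
          apply Finset.prod_congr rfl
          intro i hi
          rw [Function.update_of_ne (ne_of_mem_of_not_mem hi hja)]
      _ = ∏ i ∈ a, dst p (Z i) (z i) := by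
          rw [← Finset.sum_mul, sum_dst p (Z j) (subset_refl _), hp.2, one_mul]

def prof (Z : Fin n → Ω → G) (a : Finset (Fin n)) : Ω → ({ i // i ∈ a } → G) :=
  fun ω i => Z i.1 ω

def extz (a : Finset (Fin n)) (w : { i // i ∈ a } → G) : Fin n → G :=
  fun i => if h : i ∈ a then w ⟨i, h⟩ else 0

lemma prof_eq_iff {Z : Fin n → Ω → G} {a : Finset (Fin n)} {w : { i // i ∈ a } → G} {ω : Ω} :
    prof Z a ω = w ↔ ∀ i ∈ a, Z i ω = extz a w i := by
  constructor
  · intro h i hi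
    rw [extz, dif_pos hi, ← h]
    rfl
  · intro h
    funext i
    have := h i.1 i.2
    rw [extz, dif_pos i.2] at this
    exact this

lemma dst_prof [DecidableEq G] {p : Ω → ℝ} (hp : IsProbMass p) {Z : Fin n → Ω → G}
    (hZ : IndepRVs p Z) (a : Finset (Fin n)) (w : { i // i ∈ a } → G) :
    dst p (prof Z a) w = ∏ i ∈ a, dst p (Z i) (extz a w i) := by
  classical
  rw [dst_def, ← marg hp hZ a (extz a w)]
  apply Finset.sum_congr _ fun _ _ => rfl
  ext ω
  simp only [Finset.mem_filter, Finset.mem_univ, true_and]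
  exact prof_eq_iff

lemma pairInd_prof [DecidableEq G] {p : Ω → ℝ} (hp : IsProbMass p) {Z : Fin n → Ω → G}
    (hZ : IndepRVs p Z) {a b : Finset (Fin n)} (hab : Disjoint a b) :
    pairInd p (prof Z a) (prof Z b) := by
  classical
  intro wa wb
  set zc : Fin n → G := fun i => if h : i ∈ a then wa ⟨i, h⟩
    else if h : i ∈ b then wb ⟨i, h⟩ else 0 with hzc
  have hza : ∀ i ∈ a, extz a wa i = zc i := by
    intro i hi
    simp [extz, zc, hi]
  have hzb : ∀ i ∈ b, extz b wb i = zc i := by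
    intro i hi
    have hia : i ∉ a := fun h => Finset.disjoint_left.mp hab h hi
    simp [extz, zc, hi, hia]
  have hjoint : dst p (fun ω => (prof Z a ω, prof Z b ω)) (wa, wb)
      = ∏ i ∈ a ∪ b, dst p (Z i) (zc i) := by
    rw [dst_def, ← marg hp hZ (a ∪ b) zc]
    apply Finset.sum_congr _ fun _ _ => rfl
    ext ω
    simp only [Finset.mem_filter, Finset.mem_univ, true_and, Prod.ext_iff, Finset.mem_union]
    constructor
    · rintro ⟨h1, h2⟩ i hi
      rcases hi with hi | hi
      · rw [← hza i hi]
        exact prof_eq_iff.mp h1 i hi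
      · rw [← hzb i hi]
        exact prof_eq_iff.mp h2 i hi
    · intro h
      refine ⟨prof_eq_iff.mpr fun i hi => ?_, prof_eq_iff.mpr fun i hi => ?_⟩
      · rw [hza i hi]; exact h i (Or.inl hi)
      · rw [hzb i hi]; exact h i (Or.inr hi)
  rw [hjoint, Finset.prod_union hab, dst_prof hp hZ a wa, dst_prof hp hZ b wb]
  congr 1
  · exact Finset.prod_congr rfl fun i hi => by rw [hza i hi]
  · exact Finset.prod_congr rfl fun i hi => by rw [hzb i hi]

noncomputable def SF (a b : Finset (Fin n)) : ({ i // i ∈ a } → G) → G :=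
  letI := Classical.decEq (Fin n)
  fun w => ∑ i ∈ a.attach, if (i : Fin n) ∈ b then w i else 0

lemma SF_prof {Z : Fin n → Ω → G} {a b : Finset (Fin n)} (hba : b ⊆ a) (ω : Ω) :
    SF a b (prof Z a ω) = ∑ i ∈ b, Z i ω := by
  classical
  calc SF a b (prof Z a ω)
      = ∑ i ∈ a.attach, (fun j => if j ∈ b then Z j ω else 0) (i : Fin n) := by
        unfold SF prof; congr!
    _ = ∑ i ∈ a, (if i ∈ b then Z i ω else 0) :=
        Finset.sum_attach a (fun j => if j ∈ b then Z j ω else 0)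
    _ = ∑ i ∈ a.filter (· ∈ b), Z i ω := (Finset.sum_filter _ _).symm
    _ = ∑ i ∈ b, Z i ω := by
        rw [Finset.filter_mem_eq_inter, Finset.inter_eq_right.mpr hba]

variable [DecidableEq G] {p : Ω → ℝ} {Z : Fin n → Ω → G}

lemma pairInd_sum_sum (hp : IsProbMass p) (hZ : IndepRVs p Z) {a b : Finset (Fin n)}
    (hab : Disjoint a b) :
    pairInd p (fun ω => ∑ i ∈ a, Z i ω) (fun ω => ∑ i ∈ b, Z i ω) := by
  have h := (pairInd_prof hp hZ hab).comp (SF a a) (SF b b)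
  have ea : (fun ω => SF a a (prof Z a ω)) = fun ω => ∑ i ∈ a, Z i ω :=
    funext fun ω => SF_prof (subset_refl a) ω
  have eb : (fun ω => SF b b (prof Z b ω)) = fun ω => ∑ i ∈ b, Z i ω :=
    funext fun ω => SF_prof (subset_refl b) ω
  rwa [ea, eb] at h

lemma pairInd_pair_sum (hp : IsProbMass p) (hZ : IndepRVs p Z) {a b c : Finset (Fin n)}
    (h : Disjoint (a ∪ b) c) :
    pairInd p (fun ω => (∑ i ∈ a, Z i ω, ∑ i ∈ b, Z i ω)) (fun ω => ∑ i ∈ c, Z i ω) := by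
  have h' := (pairInd_prof hp hZ h).comp
    (fun w => (SF (a ∪ b) a w, SF (a ∪ b) b w)) (SF c c)
  have ea : (fun ω => (SF (a ∪ b) a (prof Z (a ∪ b) ω), SF (a ∪ b) b (prof Z (a ∪ b) ω)))
      = fun ω => (∑ i ∈ a, Z i ω, ∑ i ∈ b, Z i ω) :=
    funext fun ω => by
      rw [SF_prof Finset.subset_union_left ω, SF_prof Finset.subset_union_right ω]
  have ec : (fun ω => SF c c (prof Z c ω)) = fun ω => ∑ i ∈ c, Z i ω :=
    funext fun ω => SF_prof (subset_refl c) ω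
  rwa [ea, ec] at h'

lemma pairInd_sum_pair (hp : IsProbMass p) (hZ : IndepRVs p Z) {a b c : Finset (Fin n)}
    (h : Disjoint a (b ∪ c)) :
    pairInd p (fun ω => ∑ i ∈ a, Z i ω) (fun ω => (∑ i ∈ b, Z i ω, ∑ i ∈ c, Z i ω)) := by
  have h' := (pairInd_prof hp hZ h).comp (SF a a)
    (fun w => (SF (b ∪ c) b w, SF (b ∪ c) c w))
  have ea : (fun ω => SF a a (prof Z a ω)) = fun ω => ∑ i ∈ a, Z i ω :=
    funext fun ω => SF_prof (subset_refl a) ω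
  have ebc : (fun ω => (SF (b ∪ c) b (prof Z (b ∪ c) ω), SF (b ∪ c) c (prof Z (b ∪ c) ω)))
      = fun ω => (∑ i ∈ b, Z i ω, ∑ i ∈ c, Z i ω) :=
    funext fun ω => by
      rw [SF_prof Finset.subset_union_left ω, SF_prof Finset.subset_union_right ω]
  rwa [ea, ebc] at h'

lemma submod_sums (hp : IsProbMass p) (hZ : IndepRVs p Z) {a b c : Finset (Fin n)}
    (hab : Disjoint a b) (hac : Disjoint a c) (hbc : Disjoint b c) :
    ent p (fun ω => ∑ i ∈ (a ∪ b) ∪ c, Z i ω) + ent p (fun ω => ∑ i ∈ b, Z i ω)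
      ≤ ent p (fun ω => ∑ i ∈ a ∪ b, Z i ω) + ent p (fun ω => ∑ i ∈ b ∪ c, Z i ω) := by
  have h1 := pairInd_pair_sum hp hZ (a := a) (b := b) (c := c)
    (Finset.disjoint_union_left.mpr ⟨hac, hbc⟩)
  have h2 := pairInd_sum_pair hp hZ (a := a) (b := b) (c := c)
    (Finset.disjoint_union_right.mpr ⟨hab, hac⟩)
  have h3 := pairInd_sum_sum hp hZ hab
  have key := submod hp h1 h2 h3
  have e1 : (fun ω => ∑ i ∈ (a ∪ b) ∪ c, Z i ω)
      = fun ω => (∑ i ∈ a, Z i ω) + (∑ i ∈ b, Z i ω) + ∑ i ∈ c, Z i ω :=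
    funext fun ω => by
      rw [Finset.sum_union (Finset.disjoint_union_left.mpr ⟨hac, hbc⟩), Finset.sum_union hab]
  have e2 : (fun ω => ∑ i ∈ a ∪ b, Z i ω)
      = fun ω => (∑ i ∈ a, Z i ω) + ∑ i ∈ b, Z i ω :=
    funext fun ω => by rw [Finset.sum_union hab]
  have e3 : (fun ω => ∑ i ∈ b ∪ c, Z i ω)
      = fun ω => (∑ i ∈ b, Z i ω) + ∑ i ∈ c, Z i ω :=
    funext fun ω => by rw [Finset.sum_union hbc]
  rw [e1, e2, e3]
  exact key

lemma mono_sums (hp : IsProbMass p) (hZ : IndepRVs p Z) {a b : Finset (Fin n)}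
    (hab : Disjoint a b) :
    ent p (fun ω => ∑ i ∈ b, Z i ω) ≤ ent p (fun ω => ∑ i ∈ a ∪ b, Z i ω) := by
  have h := ent_mono hp (pairInd_sum_sum hp hZ hab.symm)
  have e : (fun ω => ∑ i ∈ a ∪ b, Z i ω)
      = fun ω => (∑ i ∈ a, Z i ω) + ∑ i ∈ b, Z i ω :=
    funext fun ω => by rw [Finset.sum_union hab]
  rw [e]
  exact h

end FC

/-- Fractional-covering upper bound for the entropy of a sum of independent random
variables in an abelian group. -/
theorem entropy_sum_fractional_covering {Ω G : Type*} [Fintype Ω] [AddCommGroup G] {n : ℕ}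
    (p : Ω → ℝ) (hp : IsProbMass p) (Z : Fin n → Ω → G) (hZ : IndepRVs p Z)
    (C : Finset (Finset (Fin n))) (α : Finset (Fin n) → ℝ)
    (hα : ∀ s ∈ C, 0 ≤ α s)
    (hcov : ∀ i : Fin n, 1 ≤ ∑ s ∈ C.filter (fun s => i ∈ s), α s) :
    ent p (fun ω => ∑ i, Z i ω)
      ≤ ∑ s ∈ C, α s * ent p (fun ω => ∑ i ∈ s, Z i ω) := by
  classical
  set f : Finset (Fin n) → ℝ := fun s => ent p (fun ω => ∑ i ∈ s, Z i ω) with hf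
  have hSub : ∀ {a b c : Finset (Fin n)}, Disjoint a b → Disjoint a c → Disjoint b c →
      f ((a ∪ b) ∪ c) + f b ≤ f (a ∪ b) + f (b ∪ c) :=
    fun hab hac hbc => FC.submod_sums hp hZ hab hac hbc
  have hMono : ∀ {a b : Finset (Fin n)}, Disjoint a b → f b ≤ f (a ∪ b) :=
    fun h => FC.mono_sums hp hZ h
  have hempty : f ∅ = 0 := by
    have : f ∅ = ent p (fun ω => ∑ i ∈ (∅ : Finset (Fin n)), Z i ω) := rfl
    rw [this]
    simp only [Finset.sum_empty]
    exact FC.ent_const hp 0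
  set inc : Fin n → ℝ := fun i => f (Finset.Iic i) - f (Finset.Iio i) with hinc
  have hinc_nonneg : ∀ i, 0 ≤ inc i := by
    intro i
    have hd : Disjoint {i} (Finset.Iio i) := by
      rw [Finset.disjoint_singleton_left]
      simp
    have hm := hMono hd
    rw [← Finset.insert_eq, Finset.Iio_insert] at hm
    simp only [hinc]
    linarith
  have hchain : ∀ s : Finset (Fin n), ∑ i ∈ s, inc i ≤ f s := by
    intro s
    induction s using Finset.induction_on_max with
    | empty => simp [hempty]
    | insert a s ha ih =>
      have hanot : a ∉ s := fun h => lt_irrefl a (ha a h)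
      rw [Finset.sum_insert hanot]
      have hsub : s ⊆ Finset.Iio a := fun x hx => Finset.mem_Iio.mpr (ha x hx)
      have d1 : Disjoint {a} s := Finset.disjoint_singleton_left.mpr hanot
      have d2 : Disjoint {a} (Finset.Iio a \ s) := by
        rw [Finset.disjoint_singleton_left]
        simp
      have d3 : Disjoint s (Finset.Iio a \ s) := Finset.disjoint_sdiff
      have key := hSub d1 d2 d3
      have e1 : ({a} ∪ s) ∪ (Finset.Iio a \ s) = Finset.Iic a := by
        rw [← Finset.insert_eq, Finset.insert_union,
          Finset.union_sdiff_of_subset hsub, Finset.Iio_insert]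
      have e2 : s ∪ (Finset.Iio a \ s) = Finset.Iio a := Finset.union_sdiff_of_subset hsub
      rw [e1, e2, ← Finset.insert_eq] at key
      have hia : inc a = f (Finset.Iic a) - f (Finset.Iio a) := rfl
      linarith
  set g : ℕ → ℝ := fun k => f (Finset.univ.filter (fun i : Fin n => (i : ℕ) < k)) with hg
  have hg0 : g 0 = 0 := by
    have h0 : Finset.univ.filter (fun i : Fin n => (i : ℕ) < 0) = ∅ := by
      apply Finset.filter_false_of_mem
      intro i _
      omega
    rw [show g 0 = f (Finset.univ.filter (fun i : Fin n => (i : ℕ) < 0)) from rfl, h0, hempty]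
  have hgn : g n = f Finset.univ := by
    have hn : Finset.univ.filter (fun i : Fin n => (i : ℕ) < n) = Finset.univ :=
      Finset.filter_true_of_mem fun i _ => i.2
    rw [show g n = f (Finset.univ.filter (fun i : Fin n => (i : ℕ) < n)) from rfl, hn]
  have htel : ∑ i : Fin n, inc i = f Finset.univ := by
    have hIio : ∀ i : Fin n, Finset.Iio i
        = Finset.univ.filter (fun j : Fin n => (j : ℕ) < (i : ℕ)) := by
      intro i
      ext j
      simp only [Finset.mem_Iio, Finset.mem_filter, Finset.mem_univ, true_and, Fin.lt_def]
    have hIic : ∀ i : Fin n, Finset.Iic i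
        = Finset.univ.filter (fun j : Fin n => (j : ℕ) < (i : ℕ) + 1) := by
      intro i
      ext j
      simp only [Finset.mem_Iic, Finset.mem_filter, Finset.mem_univ, true_and, Fin.le_def,
        Nat.lt_succ_iff]
    have h1 : ∀ i ∈ (Finset.univ : Finset (Fin n)),
        inc i = (fun k => g (k + 1) - g k) ((i : ℕ)) := by
      intro i _
      simp only [hinc, hg]
      rw [hIio i, hIic i]
    rw [Finset.sum_congr rfl h1, Fin.sum_univ_eq_sum_range (fun k => g (k + 1) - g k) n,
      Finset.sum_range_sub g n, hg0, hgn, sub_zero]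
  have hstart : ent p (fun ω => ∑ i, Z i ω) = ∑ i : Fin n, inc i := by
    rw [htel]
  rw [hstart]
  calc ∑ i : Fin n, inc i
      ≤ ∑ i : Fin n, (∑ s ∈ C.filter (fun s => i ∈ s), α s) * inc i := by
        apply Finset.sum_le_sum
        intro i _
        calc inc i = 1 * inc i := (one_mul _).symm
          _ ≤ _ := mul_le_mul_of_nonneg_right (hcov i) (hinc_nonneg i)
    _ = ∑ s ∈ C, α s * ∑ i ∈ s, inc i := by
        simp_rw [Finset.sum_filter, Finset.sum_mul]
        rw [Finset.sum_comm]
        apply Finset.sum_congr rfl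
        intro s _
        have hite : ∀ i ∈ (Finset.univ : Finset (Fin n)),
            (if i ∈ s then α s else 0) * inc i = if i ∈ s then α s * inc i else 0 := by
          intro i _
          split_ifs <;> ring
        rw [Finset.sum_congr rfl hite, ← Finset.sum_filter, Finset.filter_mem_eq_inter,
          Finset.univ_inter, Finset.mul_sum]
    _ ≤ ∑ s ∈ C, α s * f s :=
        Finset.sum_le_sum fun s hs => mul_le_mul_of_nonneg_left (hchain s) (hα s hs)
    _ = ∑ s ∈ C, α s * ent p (fun ω => ∑ i ∈ s, Z i ω) := rfl
end

section
/- Let G be an abelian group, Z1,…,Zn independent discrete random variables in G, and let C be an r-regular hypergraph on [n] (every index i lies in exactly r sets of C). Then r · H(Z1+⋯+Zn) ≤ ∑_{s∈C} H(∑_{i∈s} Z_i). -/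
open Finset

open Real

section EntAux1
variable {Ω S T : Type*} [Fintype Ω] {p : Ω → ℝ}

noncomputable def prb {Ω S : Type*} [Fintype Ω] (p : Ω → ℝ) (X : Ω → S) (y : S) : ℝ :=
  letI := Classical.decEq S
  ∑ ω ∈ Finset.univ.filter (fun ω => X ω = y), p ω

lemma prb_def {Ω S : Type*} [Fintype Ω] [DecidableEq S] (p : Ω → ℝ) (X : Ω → S) (y : S) :
    prb p X y = ∑ ω ∈ Finset.univ.filter (fun ω => X ω = y), p ω := by
  have h : (Classical.decEq S) = ‹DecidableEq S› := Subsingleton.elim _ _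
  unfold prb; rw [h]

lemma ent_def {Ω S : Type*} [Fintype Ω] [DecidableEq S] (p : Ω → ℝ) (X : Ω → S) :
    ent p X = ∑ y ∈ Finset.univ.image X, Real.negMulLog (prb p X y) := by
  have h : (Classical.decEq S) = ‹DecidableEq S› := Subsingleton.elim _ _
  unfold ent prb; rw [h]


/-- fibering a weighted sum over the values of a map into a finite set. -/
lemma sum_fiber {α : Type*} [DecidableEq α] (w : Ω → ℝ) (X : Ω → α) (P : Finset α)
    (hX : ∀ ω, X ω ∈ P) (Q : α → Prop) [DecidablePred Q] :
    ∑ ω ∈ univ.filter (fun ω => Q (X ω)), w ω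
      = ∑ z ∈ P.filter Q, ∑ ω ∈ univ.filter (fun ω => X ω = z), w ω := by
  rw [← Finset.sum_fiberwise_of_maps_to (s := univ.filter fun ω => Q (X ω))
    (t := P.filter Q) (g := X) (fun ω hω => by
      simp only [Finset.mem_filter] at hω ⊢
      exact ⟨hX ω, hω.2⟩) w]
  refine Finset.sum_congr rfl fun z hz => ?_
  simp only [Finset.mem_filter] at hz
  congr 1
  ext ω
  simp only [Finset.mem_filter, Finset.mem_univ, true_and]
  constructor
  · rintro ⟨_, h⟩; exact h
  · intro h; exact ⟨h ▸ hz.2, h⟩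

lemma prb_nonneg [DecidableEq S] (hp : ∀ ω, 0 ≤ p ω) (X : Ω → S) (y : S) : 0 ≤ prb p X y := by
  rw [prb_def]; exact Finset.sum_nonneg fun ω _ => hp ω

lemma sum_prb [DecidableEq S] (hp : IsProbMass p) (X : Ω → S) :
    ∑ y ∈ univ.image X, prb p X y = 1 := by
  have : ∑ y ∈ univ.image X, prb p X y
      = ∑ y ∈ univ.image X, ∑ ω ∈ univ.filter (fun ω => X ω = y), p ω :=
    Finset.sum_congr rfl fun y _ => prb_def p X y
  rw [this, Finset.sum_fiberwise_of_maps_to (fun ω _ => Finset.mem_image_of_mem X (mem_univ ω)) p]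
  exact hp.2

lemma prb_le_one [DecidableEq S] (hp : IsProbMass p) (X : Ω → S) (y : S) : prb p X y ≤ 1 := by
  rw [prb_def, ← hp.2]
  exact Finset.sum_le_sum_of_subset_of_nonneg (Finset.filter_subset _ _) fun ω _ _ => hp.1 ω

lemma prb_eq_zero [DecidableEq S] (X : Ω → S) {y : S} (hy : y ∉ univ.image X) :
    prb p X y = 0 := by
  rw [prb_def]
  apply Finset.sum_eq_zero
  intro ω hω
  simp only [Finset.mem_filter] at hω
  exact absurd (hω.2 ▸ Finset.mem_image_of_mem X (mem_univ ω)) hy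

lemma negMulLog_add_le {a b : ℝ} (ha : 0 ≤ a) (hb : 0 ≤ b) :
    negMulLog (a + b) ≤ negMulLog a + negMulLog b := by
  have key : ∀ x y : ℝ, 0 ≤ x → 0 ≤ y → -(x * Real.log (x + y)) ≤ negMulLog x := by
    intro x y hx hy
    rcases eq_or_lt_of_le hx with h | h
    · simp [← h, negMulLog]
    · rw [negMulLog, neg_mul, neg_le_neg_iff]
      exact mul_le_mul_of_nonneg_left (Real.log_le_log h (by linarith)) hx
  have : negMulLog (a + b) = -(a * Real.log (a + b)) + -(b * Real.log (a + b)) := by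
    rw [negMulLog]; ring
  rw [this]
  have h2 : -(b * Real.log (b + a)) ≤ negMulLog b := key b a hb ha
  rw [add_comm b a] at h2
  exact add_le_add (key a b ha hb) h2

lemma negMulLog_sum_le {α : Type*} (s : Finset α) (a : α → ℝ) (h : ∀ x ∈ s, 0 ≤ a x) :
    negMulLog (∑ x ∈ s, a x) ≤ ∑ x ∈ s, negMulLog (a x) := by
  classical
  induction s using Finset.induction with
  | empty => simp
  | @insert c s' hx ih =>
    rw [Finset.sum_insert hx, Finset.sum_insert hx]
    calc negMulLog (a c + ∑ x ∈ s', a x)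
        ≤ negMulLog (a c) + negMulLog (∑ x ∈ s', a x) :=
          negMulLog_add_le (h c (mem_insert_self c s'))
            (Finset.sum_nonneg fun x hx' => h x (mem_insert_of_mem hx'))
      _ ≤ negMulLog (a c) + ∑ x ∈ s', negMulLog (a x) := by
          exact add_le_add le_rfl (ih fun x hx' => h x (mem_insert_of_mem hx'))

lemma ent_nonneg (hp : IsProbMass p) (X : Ω → S) : 0 ≤ ent p X := by
  classical
  rw [ent_def]
  exact Finset.sum_nonneg fun y _ =>
    negMulLog_nonneg (prb_nonneg hp.1 X y) (prb_le_one hp X y)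

lemma ent_const (hp : IsProbMass p) (c : S) : ent p (fun _ => c) = 0 := by
  classical
  rw [ent_def]
  rcases isEmpty_or_nonempty Ω with h | h
  · simp
  · rw [show (univ.image fun _ : Ω => c) = {c} by
      rw [Finset.image_const univ_nonempty c]]
    rw [Finset.sum_singleton, prb_def]
    simp [hp.2]


lemma image_comp_eq [DecidableEq S] [DecidableEq T] (g : S → T) (X : Ω → S) :
    univ.image (fun ω => g (X ω)) = (univ.image X).image g := by
  rw [Finset.image_image]; rfl

lemma prb_comp [DecidableEq S] [DecidableEq T] (g : S → T) (X : Ω → S) (t : T) :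
    prb p (fun ω => g (X ω)) t = ∑ y ∈ (univ.image X).filter (fun y => g y = t), prb p X y := by
  rw [prb_def]
  rw [sum_fiber p X (univ.image X) (fun ω => Finset.mem_image_of_mem X (mem_univ ω))
    (fun y => g y = t)]
  exact Finset.sum_congr rfl fun y _ => (prb_def p X y).symm

lemma ent_comp_le [DecidableEq S] [DecidableEq T] (hp : ∀ ω, 0 ≤ p ω) (g : S → T) (X : Ω → S) :
    ent p (fun ω => g (X ω)) ≤ ent p X := by
  rw [ent_def, ent_def, image_comp_eq g X]
  calc ∑ t ∈ (univ.image X).image g, negMulLog (prb p (fun ω => g (X ω)) t)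
      ≤ ∑ t ∈ (univ.image X).image g,
          ∑ y ∈ (univ.image X).filter (fun y => g y = t), negMulLog (prb p X y) := by
        refine Finset.sum_le_sum fun t _ => ?_
        rw [prb_comp]
        exact negMulLog_sum_le _ _ fun y _ => prb_nonneg hp X y
    _ = ∑ y ∈ univ.image X, negMulLog (prb p X y) :=
        Finset.sum_fiberwise_of_maps_to (fun y hy => Finset.mem_image_of_mem g hy) _

lemma ent_comp_eq (hp : ∀ ω, 0 ≤ p ω) (g : S → T) (g' : T → S) (X : Ω → S)
    (h : ∀ ω, g' (g (X ω)) = X ω) :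
    ent p (fun ω => g (X ω)) = ent p X := by
  classical
  refine le_antisymm (ent_comp_le hp g X) ?_
  have h2 := ent_comp_le (p := p) hp g' (fun ω => g (X ω))
  have h3 : (fun ω => g' (g (X ω))) = X := funext h
  rwa [h3] at h2

lemma prb_comp_ge [DecidableEq S] [DecidableEq T] (hp : ∀ ω, 0 ≤ p ω) (g : S → T) (X : Ω → S)
    (y : S) : prb p X y ≤ prb p (fun ω => g (X ω)) (g y) := by
  rw [prb_def, prb_def]
  refine Finset.sum_le_sum_of_subset_of_nonneg ?_ fun ω _ _ => hp ω
  intro ω hω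
  simp only [Finset.mem_filter, Finset.mem_univ, true_and] at hω ⊢
  rw [hω]

lemma ent_grouping [DecidableEq S] [DecidableEq T] (g : S → T) (X : Ω → S) :
    ent p (fun ω => g (X ω))
      = ∑ y ∈ univ.image X, prb p X y * (-Real.log (prb p (fun ω => g (X ω)) (g y))) := by
  rw [ent_def, image_comp_eq g X]
  rw [← Finset.sum_fiberwise_of_maps_to (g := g) (t := (univ.image X).image g)
    (fun y hy => Finset.mem_image_of_mem g hy)
    (fun y => prb p X y * (-Real.log (prb p (fun ω => g (X ω)) (g y))))]
  refine Finset.sum_congr rfl fun t ht => ?_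
  have hrw : ∀ y ∈ (univ.image X).filter (fun y => g y = t),
      prb p X y * (-Real.log (prb p (fun ω => g (X ω)) (g y)))
        = prb p X y * (-Real.log (prb p (fun ω => g (X ω)) t)) := by
    intro y hy
    simp only [Finset.mem_filter] at hy
    rw [hy.2]
  rw [Finset.sum_congr rfl hrw, ← Finset.sum_mul, ← prb_comp]
  rw [negMulLog]
  ring

end EntAux1

section EntAux2
variable {Ω S T S₁ S₂ S₃ : Type*} [Fintype Ω] {p : Ω → ℝ}

lemma sum_prb_fst [DecidableEq S] [DecidableEq T] (U : Ω → S) (V : Ω → T) (c : T) :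
    ∑ a ∈ univ.image U, prb p (fun ω => (U ω, V ω)) (a, c) = prb p V c := by
  rw [prb_def]
  rw [← Finset.sum_fiberwise_of_maps_to (s := univ.filter fun ω => V ω = c)
    (t := univ.image U) (g := U) (fun ω _ => mem_image_of_mem U (mem_univ ω)) p]
  refine Finset.sum_congr rfl fun a _ => ?_
  rw [prb_def]
  congr 1
  ext ω
  simp only [Finset.mem_filter, Finset.mem_univ, true_and, Prod.mk.injEq]
  tauto

/-- Pair entropy for independent variables. -/
lemma ent_pair_of_indep [DecidableEq S] [DecidableEq T] (hp : IsProbMass p)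
    (X : Ω → S) (Y : Ω → T)
    (hind : ∀ a b, prb p (fun ω => (X ω, Y ω)) (a, b) = prb p X a * prb p Y b) :
    ent p (fun ω => (X ω, Y ω)) = ent p X + ent p Y := by
  rw [ent_def p (fun ω => (X ω, Y ω))]
  have hsub : univ.image (fun ω => (X ω, Y ω)) ⊆ (univ.image X) ×ˢ (univ.image Y) := by
    intro c hc
    rcases Finset.mem_image.1 hc with ⟨ω, _, rfl⟩
    exact Finset.mk_mem_product (mem_image_of_mem X (mem_univ ω)) (mem_image_of_mem Y (mem_univ ω))
  rw [Finset.sum_subset hsub (fun c _ hc => by rw [prb_eq_zero _ hc, negMulLog_zero])]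
  rw [Finset.sum_product]
  have : ∀ a ∈ univ.image X, ∀ b ∈ univ.image Y,
      negMulLog (prb p (fun ω => (X ω, Y ω)) (a, b))
        = prb p Y b * negMulLog (prb p X a) + prb p X a * negMulLog (prb p Y b) := by
    intro a _ b _
    rw [hind a b, negMulLog_mul]
  calc ∑ a ∈ univ.image X, ∑ b ∈ univ.image Y, negMulLog (prb p (fun ω => (X ω, Y ω)) (a, b))
      = ∑ a ∈ univ.image X, ∑ b ∈ univ.image Y,
          (prb p Y b * negMulLog (prb p X a) + prb p X a * negMulLog (prb p Y b)) :=
        Finset.sum_congr rfl fun a ha => Finset.sum_congr rfl fun b hb => this a ha b hb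
    _ = ∑ a ∈ univ.image X,
          ((∑ b ∈ univ.image Y, prb p Y b) * negMulLog (prb p X a)
            + prb p X a * (∑ b ∈ univ.image Y, negMulLog (prb p Y b))) := by
        refine Finset.sum_congr rfl fun a _ => ?_
        rw [Finset.sum_add_distrib, ← Finset.sum_mul, ← Finset.mul_sum]
    _ = ent p X + ent p Y := by
        rw [sum_prb hp Y]
        rw [Finset.sum_add_distrib, ← Finset.sum_mul, sum_prb hp X]
        rw [ent_def p X, ent_def p Y]
        simp

/-- Submodularity of entropy. -/
lemma ent_submodular [DecidableEq S₁] [DecidableEq S₂] [DecidableEq S₃] (hp : IsProbMass p)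
    (W₁ : Ω → S₁) (W₂ : Ω → S₂) (W₃ : Ω → S₃) :
    ent p (fun ω => (W₁ ω, W₂ ω, W₃ ω)) + ent p W₃
      ≤ ent p (fun ω => (W₁ ω, W₃ ω)) + ent p (fun ω => (W₂ ω, W₃ ω)) := by
  set X := fun ω => (W₁ ω, W₂ ω, W₃ ω) with hX
  set I := univ.image X with hI
  set m := prb p X with hm
  set f : S₁ → S₃ → ℝ := fun a c => prb p (fun ω => (W₁ ω, W₃ ω)) (a, c) with hf
  set g : S₂ → S₃ → ℝ := fun b c => prb p (fun ω => (W₂ ω, W₃ ω)) (b, c) with hg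
  set h : S₃ → ℝ := fun c => prb p W₃ c with hh
  set q : S₁ × S₂ × S₃ → ℝ := fun y => f y.1 y.2.2 * g y.2.1 y.2.2 / h y.2.2 with hq
  -- entropy rewrites
  have eX : ent p X = ∑ y ∈ I, m y * (-Real.log (m y)) :=
    ent_grouping (id : S₁ × S₂ × S₃ → S₁ × S₂ × S₃) X
  have e3 : ent p W₃ = ∑ y ∈ I, m y * (-Real.log (h y.2.2)) :=
    ent_grouping (fun t : S₁ × S₂ × S₃ => t.2.2) X
  have e13 : ent p (fun ω => (W₁ ω, W₃ ω)) = ∑ y ∈ I, m y * (-Real.log (f y.1 y.2.2)) :=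
    ent_grouping (fun t : S₁ × S₂ × S₃ => (t.1, t.2.2)) X
  have e23 : ent p (fun ω => (W₂ ω, W₃ ω)) = ∑ y ∈ I, m y * (-Real.log (g y.2.1 y.2.2)) :=
    ent_grouping (fun t : S₁ × S₂ × S₃ => (t.2.1, t.2.2)) X
  -- nonnegativity of q
  have hq0 : ∀ y, 0 ≤ q y := fun y =>
    div_nonneg (mul_nonneg (prb_nonneg hp.1 _ _) (prb_nonneg hp.1 _ _)) (prb_nonneg hp.1 _ _)
  -- pointwise key bound
  have key : ∀ y ∈ I, m y * (-Real.log (m y)) + m y * (-Real.log (h y.2.2))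
      ≤ m y * (-Real.log (f y.1 y.2.2)) + m y * (-Real.log (g y.2.1 y.2.2)) + (q y - m y) := by
    intro y hy
    rcases eq_or_lt_of_le (prb_nonneg (S := S₁ × S₂ × S₃) hp.1 X y) with h0 | h0
    · rw [hm, ← h0]
      simpa using hq0 y
    · have hf0 : m y ≤ f y.1 y.2.2 := by
        have := prb_comp_ge (p := p) hp.1 (fun t : S₁ × S₂ × S₃ => (t.1, t.2.2)) X y
        exact this
      have hg0 : m y ≤ g y.2.1 y.2.2 := prb_comp_ge hp.1 (fun t : S₁ × S₂ × S₃ => (t.2.1, t.2.2)) X y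
      have hh0 : m y ≤ h y.2.2 := prb_comp_ge hp.1 (fun t : S₁ × S₂ × S₃ => t.2.2) X y
      have hfpos := lt_of_lt_of_le h0 hf0
      have hgpos := lt_of_lt_of_le h0 hg0
      have hhpos := lt_of_lt_of_le h0 hh0
      have hqpos : 0 < q y := div_pos (mul_pos hfpos hgpos) hhpos
      have hlog : Real.log (q y / m y) ≤ q y / m y - 1 :=
        Real.log_le_sub_one_of_pos (div_pos hqpos h0)
      have hexp : Real.log (q y / m y)
          = Real.log (f y.1 y.2.2) + Real.log (g y.2.1 y.2.2) - Real.log (h y.2.2)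
            - Real.log (m y) := by
        rw [hq]
        rw [Real.log_div (by positivity) (ne_of_gt h0),
            Real.log_div (by positivity) (ne_of_gt hhpos),
            Real.log_mul (ne_of_gt hfpos) (ne_of_gt hgpos)]
      have hmul := mul_le_mul_of_nonneg_left hlog (le_of_lt h0)
      rw [hexp] at hmul
      have : m y * (q y / m y - 1) = q y - m y := by
        have hm0 : m y ≠ 0 := ne_of_gt h0
        rw [mul_sub, mul_one, mul_div_assoc', mul_div_right_comm, div_self hm0, one_mul]
      rw [this] at hmul
      nlinarith [hmul]
  -- sum of q is at most one
  have hqsum : ∑ y ∈ I, q y ≤ 1 := by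
    have hsub : I ⊆ (univ.image W₁) ×ˢ (univ.image W₂) ×ˢ (univ.image W₃) := by
      intro c hc
      rcases Finset.mem_image.1 hc with ⟨ω, _, rfl⟩
      exact Finset.mk_mem_product (mem_image_of_mem W₁ (mem_univ ω))
        (Finset.mk_mem_product (mem_image_of_mem W₂ (mem_univ ω))
          (mem_image_of_mem W₃ (mem_univ ω)))
    have h1 : ∑ y ∈ I, q y ≤ ∑ y ∈ (univ.image W₁) ×ˢ (univ.image W₂) ×ˢ (univ.image W₃), q y :=
      Finset.sum_le_sum_of_subset_of_nonneg hsub fun y _ _ => hq0 y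
    have h2 : ∑ y ∈ (univ.image W₁) ×ˢ (univ.image W₂) ×ˢ (univ.image W₃), q y
        = ∑ c ∈ univ.image W₃, h c * (h c / h c) := by
      rw [Finset.sum_product]
      have inner : ∀ a ∈ univ.image W₁,
          ∑ z ∈ (univ.image W₂) ×ˢ (univ.image W₃), q (a, z)
            = ∑ c ∈ univ.image W₃, f a c * (h c / h c) := by
        intro a _
        rw [Finset.sum_product, Finset.sum_comm]
        refine Finset.sum_congr rfl fun c _ => ?_
        have : ∀ b, q (a, (b, c)) = f a c / h c * g b c := fun b => by
          rw [hq]; ring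
        rw [Finset.sum_congr rfl fun b _ => this b, ← Finset.mul_sum, sum_prb_fst W₂ W₃ c]
        show f a c / h c * h c = f a c * (h c / h c)
        ring
      rw [Finset.sum_congr rfl inner, Finset.sum_comm]
      refine Finset.sum_congr rfl fun c _ => ?_
      rw [← Finset.sum_mul, sum_prb_fst W₁ W₃ c]
    have h3 : ∑ c ∈ univ.image W₃, h c * (h c / h c) ≤ ∑ c ∈ univ.image W₃, h c := by
      refine Finset.sum_le_sum fun c _ => ?_
      rcases eq_or_lt_of_le (prb_nonneg (p := p) hp.1 W₃ c) with h0 | h0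
      · have hc0 : h c = 0 := h0.symm
        rw [hc0]; simp
      · rw [div_self (ne_of_gt h0), mul_one]
    have h4 : ∑ c ∈ univ.image W₃, h c = 1 := sum_prb hp W₃
    linarith
  have hmsum : ∑ y ∈ I, m y = 1 := sum_prb hp X
  rw [eX, e3, e13, e23]
  have eqL : ∑ y ∈ I, (m y * (-Real.log (m y)) + m y * (-Real.log (h y.2.2)))
      = ∑ y ∈ I, m y * (-Real.log (m y)) + ∑ y ∈ I, m y * (-Real.log (h y.2.2)) :=
    Finset.sum_add_distrib
  have eqR : ∑ y ∈ I, (m y * (-Real.log (f y.1 y.2.2)) + m y * (-Real.log (g y.2.1 y.2.2))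
        + (q y - m y))
      = (∑ y ∈ I, m y * (-Real.log (f y.1 y.2.2))
          + ∑ y ∈ I, m y * (-Real.log (g y.2.1 y.2.2)))
        + ((∑ y ∈ I, q y) - ∑ y ∈ I, m y) := by
    rw [Finset.sum_add_distrib, Finset.sum_add_distrib, Finset.sum_sub_distrib]
  have hs := Finset.sum_le_sum key
  rw [eqL, eqR] at hs
  linarith [hs, hqsum, hmsum]

end EntAux2

section EntAux3
variable {Ω G : Type*} [Fintype Ω] {n : ℕ} {p : Ω → ℝ}
variable {Z : Fin n → Ω → G}

lemma indep_def [DecidableEq G] (hZ : IndepRVs p Z) (z : Fin n → G) :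
    ∑ ω ∈ univ.filter (fun ω => ∀ i, Z i ω = z i), p ω = ∏ i, prb p (Z i) (z i) := by
  have h : (Classical.decEq G) = ‹DecidableEq G› := Subsingleton.elim _ _
  unfold IndepRVs at hZ
  rw [h] at hZ
  rw [hZ z]
  exact Finset.prod_congr rfl fun i _ => (prb_def p (Z i) (z i)).symm

lemma partial_prod [DecidableEq G] (hp : IsProbMass p) (hZ : IndepRVs p Z)
    (B : Finset (Fin n)) (z : Fin n → G) :
    ∑ ω ∈ univ.filter (fun ω => ∀ i ∈ Bᶜ, Z i ω = z i), p ω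
      = ∏ i ∈ Bᶜ, prb p (Z i) (z i) := by
  induction B using Finset.induction generalizing z with
  | empty =>
    rw [Finset.compl_empty]
    have he : univ.filter (fun ω => ∀ i ∈ (univ : Finset (Fin n)), Z i ω = z i)
        = univ.filter (fun ω => ∀ i, Z i ω = z i) := by
      ext ω; simp
    rw [he, indep_def hZ z]
  | @insert j B hj ih =>
    have hjc : j ∈ Bᶜ := Finset.mem_compl.mpr hj
    have hcompl : (insert j B)ᶜ = Bᶜ.erase j := Finset.compl_insert
    rw [← Finset.sum_fiberwise_of_maps_to (s := univ.filter
        (fun ω => ∀ i ∈ (insert j B)ᶜ, Z i ω = z i))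
      (t := univ.image (Z j)) (g := Z j)
      (fun ω _ => mem_image_of_mem (Z j) (mem_univ ω)) p]
    have hinner : ∀ g' ∈ univ.image (Z j),
        ∑ ω ∈ (univ.filter (fun ω => ∀ i ∈ (insert j B)ᶜ, Z i ω = z i)).filter
            (fun ω => Z j ω = g'), p ω
          = prb p (Z j) g' * ∏ i ∈ (insert j B)ᶜ, prb p (Z i) (z i) := by
      intro g' _
      have hset : (univ.filter (fun ω => ∀ i ∈ (insert j B)ᶜ, Z i ω = z i)).filter
          (fun ω => Z j ω = g')
            = univ.filter (fun ω => ∀ i ∈ Bᶜ, Z i ω = Function.update z j g' i) := by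
        ext ω
        simp only [Finset.mem_filter, Finset.mem_univ, true_and]
        constructor
        · rintro ⟨hA, hg⟩ i hi
          rcases eq_or_ne i j with rfl | hij
          · rw [Function.update_self]; exact hg
          · rw [Function.update_of_ne hij]
            exact hA i (by rw [hcompl]; exact Finset.mem_erase.mpr ⟨hij, hi⟩)
        · intro hA
          constructor
          · intro i hi
            have hij : i ≠ j := by
              rw [hcompl] at hi
              exact (Finset.mem_erase.mp hi).1
            have hiB : i ∈ Bᶜ := by
              rw [hcompl] at hi
              exact Finset.mem_of_mem_erase hi
            have := hA i hiB
            rwa [Function.update_of_ne hij] at this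
          · have := hA j hjc
            rwa [Function.update_self] at this
      rw [hset, ih (Function.update z j g')]
      rw [← Finset.mul_prod_erase Bᶜ _ hjc, Function.update_self, ← hcompl]
      congr 1
      rw [hcompl]
      exact Finset.prod_congr rfl fun i hi =>
        by rw [Function.update_of_ne (Finset.mem_erase.mp hi).1]
    rw [Finset.sum_congr rfl hinner, ← Finset.sum_mul, sum_prb hp (Z j), one_mul]

lemma partial_prod' [DecidableEq G] (hp : IsProbMass p) (hZ : IndepRVs p Z)
    (s : Finset (Fin n)) (z : Fin n → G) :
    ∑ ω ∈ univ.filter (fun ω => ∀ i ∈ s, Z i ω = z i), p ω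
      = ∏ i ∈ s, prb p (Z i) (z i) := by
  have := partial_prod hp hZ sᶜ z
  rwa [compl_compl] at this

lemma atom_prod [DecidableEq G] (hZ : IndepRVs p Z) (z : Fin n → G) :
    ∑ ω ∈ univ.filter (fun ω => (fun i => Z i ω) = z), p ω = ∏ i, prb p (Z i) (z i) := by
  rw [← indep_def hZ z]
  congr 1
  ext ω
  simp [funext_iff]

lemma atom_prod2 [DecidableEq G] (hp : IsProbMass p) (hZ : IndepRVs p Z)
    (s : Finset (Fin n)) (z : Fin n → G) :
    ∑ ω ∈ (univ : Finset (Ω × Ω)).filter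
        (fun ω => (fun i => if i ∈ s then Z i ω.1 else Z i ω.2) = z), p ω.1 * p ω.2
      = ∏ i, prb p (Z i) (z i) := by
  have hset : (univ : Finset (Ω × Ω)).filter
      (fun ω => (fun i => if i ∈ s then Z i ω.1 else Z i ω.2) = z)
        = (univ.filter (fun ω₁ => ∀ i ∈ s, Z i ω₁ = z i)) ×ˢ
          (univ.filter (fun ω₂ => ∀ i ∈ sᶜ, Z i ω₂ = z i)) := by
    ext ω
    simp only [Finset.mem_filter, Finset.mem_univ, true_and, Finset.mem_product, funext_iff,
      Finset.mem_compl]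
    constructor
    · intro h
      constructor
      · intro i hi; have := h i; rwa [if_pos hi] at this
      · intro i hi; have := h i; rwa [if_neg hi] at this
    · rintro ⟨h1, h2⟩ i
      by_cases hi : i ∈ s
      · rw [if_pos hi]; exact h1 i hi
      · rw [if_neg hi]; exact h2 i hi
  rw [hset, Finset.sum_product, ← Finset.sum_mul_sum]
  rw [partial_prod' hp hZ s z, partial_prod hp hZ s z]
  exact Finset.prod_mul_prod_compl s _

lemma transfer [DecidableEq G] (hp : IsProbMass p) (hZ : IndepRVs p Z)
    (s : Finset (Fin n)) (Q : (Fin n → G) → Prop) [DecidablePred Q] :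
    ∑ ω ∈ univ.filter (fun ω => Q (fun i => Z i ω)), p ω
      = ∑ ω ∈ (univ : Finset (Ω × Ω)).filter
          (fun ω => Q (fun i => if i ∈ s then Z i ω.1 else Z i ω.2)), p ω.1 * p ω.2 := by
  rw [sum_fiber p (fun ω => fun i => Z i ω) (Fintype.piFinset (fun i => univ.image (Z i)))
    (fun ω => Fintype.mem_piFinset.mpr fun i => mem_image_of_mem (Z i) (mem_univ ω)) Q]
  rw [sum_fiber (fun ω : Ω × Ω => p ω.1 * p ω.2)
    (fun ω => fun i => if i ∈ s then Z i ω.1 else Z i ω.2)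
    (Fintype.piFinset (fun i => univ.image (Z i)))
    (fun ω => Fintype.mem_piFinset.mpr fun i => by
      split
      · exact mem_image_of_mem (Z i) (mem_univ ω.1)
      · exact mem_image_of_mem (Z i) (mem_univ ω.2)) Q]
  exact Finset.sum_congr rfl fun z _ => (atom_prod hZ z).trans (atom_prod2 hp hZ s z).symm

lemma indep_of_depends {A B : Type*} [DecidableEq G] [DecidableEq A] [DecidableEq B]
    (hp : IsProbMass p) (hZ : IndepRVs p Z)
    (s : Finset (Fin n)) (F : (Fin n → G) → A) (G' : (Fin n → G) → B)
    (hF : ∀ z w, (∀ i ∈ s, z i = w i) → F z = F w)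
    (hG : ∀ z w, (∀ i ∈ sᶜ, z i = w i) → G' z = G' w)
    (a : A) (b : B) :
    prb p (fun ω => (F (fun i => Z i ω), G' (fun i => Z i ω))) (a, b)
      = prb p (fun ω => F (fun i => Z i ω)) a * prb p (fun ω => G' (fun i => Z i ω)) b := by
  classical
  rw [prb_def, prb_def, prb_def]
  have h1 : univ.filter (fun ω => (F (fun i => Z i ω), G' (fun i => Z i ω)) = (a, b))
      = univ.filter (fun ω => (fun z => F z = a ∧ G' z = b) (fun i => Z i ω)) := by
    ext ω; simp [Prod.ext_iff]
  rw [h1, transfer hp hZ s (fun z => F z = a ∧ G' z = b)]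
  have h2 : (univ : Finset (Ω × Ω)).filter
      (fun ω => (fun z => F z = a ∧ G' z = b) (fun i => if i ∈ s then Z i ω.1 else Z i ω.2))
        = (univ.filter (fun ω₁ => F (fun i => Z i ω₁) = a)) ×ˢ
          (univ.filter (fun ω₂ => G' (fun i => Z i ω₂) = b)) := by
    ext ω
    simp only [Finset.mem_filter, Finset.mem_univ, true_and, Finset.mem_product]
    have hFe : F (fun i => if i ∈ s then Z i ω.1 else Z i ω.2) = F (fun i => Z i ω.1) :=
      hF _ _ (fun i hi => by rw [if_pos hi])
    have hGe : G' (fun i => if i ∈ s then Z i ω.1 else Z i ω.2) = G' (fun i => Z i ω.2) :=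
      hG _ _ (fun i hi => by rw [if_neg (Finset.mem_compl.mp hi)])
    rw [hFe, hGe]
  rw [h2, Finset.sum_product, ← Finset.sum_mul_sum]

end EntAux3

section EntAux4
variable {Ω G : Type*} [Fintype Ω] [AddCommGroup G] {n : ℕ} {p : Ω → ℝ}
variable {Z : Fin n → Ω → G}

lemma prb_pair_sum [DecidableEq G] (hp : IsProbMass p) (hZ : IndepRVs p Z)
    {u v : Finset (Fin n)} (huv : Disjoint u v) (a b : G) :
    prb p (fun ω => (∑ i ∈ u, Z i ω, ∑ i ∈ v, Z i ω)) (a, b)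
      = prb p (fun ω => ∑ i ∈ u, Z i ω) a * prb p (fun ω => ∑ i ∈ v, Z i ω) b := by
  have h1 := indep_of_depends (A := G) (B := G) hp hZ u (fun z : Fin n → G => ∑ i ∈ u, z i)
    (fun z : Fin n → G => ∑ i ∈ v, z i)
    (fun z w h => Finset.sum_congr rfl h)
    (fun z w h => Finset.sum_congr rfl fun i hi =>
      h i (Finset.mem_compl.mpr (Finset.disjoint_right.mp huv hi)))
    a b
  exact h1

lemma prb_triple_sum [DecidableEq G] (hp : IsProbMass p) (hZ : IndepRVs p Z)
    {u v w : Finset (Fin n)} (huv : Disjoint u v) (huw : Disjoint u w) (a : G) (b : G × G) :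
    prb p (fun ω => (∑ i ∈ u, Z i ω, (∑ i ∈ v, Z i ω, ∑ i ∈ w, Z i ω))) (a, b)
      = prb p (fun ω => ∑ i ∈ u, Z i ω) a
        * prb p (fun ω => (∑ i ∈ v, Z i ω, ∑ i ∈ w, Z i ω)) b := by
  have h1 := indep_of_depends (A := G) (B := G × G) hp hZ u (fun z : Fin n → G => ∑ i ∈ u, z i)
    (fun z : Fin n → G => (∑ i ∈ v, z i, ∑ i ∈ w, z i))
    (fun z w' h => Finset.sum_congr rfl h)
    (fun z w' h => by
      refine Prod.ext ?_ ?_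
      · exact Finset.sum_congr rfl fun i hi =>
          h i (Finset.mem_compl.mpr (Finset.disjoint_right.mp huv hi))
      · exact Finset.sum_congr rfl fun i hi =>
          h i (Finset.mem_compl.mpr (Finset.disjoint_right.mp huw hi)))
    a b
  exact h1

lemma ent_pair_sum [DecidableEq G] (hp : IsProbMass p) (hZ : IndepRVs p Z)
    {u v : Finset (Fin n)} (huv : Disjoint u v) :
    ent p (fun ω => (∑ i ∈ u, Z i ω, ∑ i ∈ v, Z i ω))
      = ent p (fun ω => ∑ i ∈ u, Z i ω) + ent p (fun ω => ∑ i ∈ v, Z i ω) :=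
  ent_pair_of_indep hp _ _ (prb_pair_sum hp hZ huv)

lemma ent_triple_sum [DecidableEq G] (hp : IsProbMass p) (hZ : IndepRVs p Z)
    {u v w : Finset (Fin n)} (huv : Disjoint u v) (huw : Disjoint u w) (hvw : Disjoint v w) :
    ent p (fun ω => (∑ i ∈ u, Z i ω, ∑ i ∈ v, Z i ω, ∑ i ∈ w, Z i ω))
      = ent p (fun ω => ∑ i ∈ u, Z i ω) + ent p (fun ω => ∑ i ∈ v, Z i ω)
        + ent p (fun ω => ∑ i ∈ w, Z i ω) := by
  have h1 := ent_pair_of_indep hp (fun ω => ∑ i ∈ u, Z i ω)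
    (fun ω => (∑ i ∈ v, Z i ω, ∑ i ∈ w, Z i ω)) (prb_triple_sum hp hZ huv huw)
  rw [h1, ent_pair_sum hp hZ hvw, add_assoc]

/-- Submodularity for entropy of subset sums. -/
lemma ent_union_inter [DecidableEq G] (hp : IsProbMass p) (hZ : IndepRVs p Z)
    (u v : Finset (Fin n)) :
    ent p (fun ω => ∑ i ∈ u ∪ v, Z i ω) + ent p (fun ω => ∑ i ∈ u ∩ v, Z i ω)
      ≤ ent p (fun ω => ∑ i ∈ u, Z i ω) + ent p (fun ω => ∑ i ∈ v, Z i ω) := by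
  have hu : ∀ ω, ∑ i ∈ u, Z i ω = (∑ i ∈ u \ v, Z i ω) + ∑ i ∈ u ∩ v, Z i ω := by
    intro ω
    rw [← Finset.sum_union (Finset.disjoint_sdiff_inter u v), Finset.sdiff_union_inter]
  have hv : ∀ ω, ∑ i ∈ v, Z i ω = (∑ i ∈ v \ u, Z i ω) + ∑ i ∈ u ∩ v, Z i ω := by
    intro ω
    calc ∑ i ∈ v, Z i ω = ∑ i ∈ v \ u ∪ v ∩ u, Z i ω := by rw [Finset.sdiff_union_inter]
      _ = (∑ i ∈ v \ u, Z i ω) + ∑ i ∈ v ∩ u, Z i ω :=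
          Finset.sum_union (Finset.disjoint_sdiff_inter v u)
      _ = (∑ i ∈ v \ u, Z i ω) + ∑ i ∈ u ∩ v, Z i ω := by rw [Finset.inter_comm]
  have hS : ∀ ω, ∑ i ∈ u ∪ v, Z i ω
      = (∑ i ∈ u \ v, Z i ω) + (∑ i ∈ u ∩ v, Z i ω) + ∑ i ∈ v \ u, Z i ω := by
    intro ω
    rw [← Finset.union_sdiff_self_eq_union (s := u) (t := v),
      Finset.sum_union (Finset.sdiff_disjoint.symm), hu ω]
  -- submodularity applied to (A, C, S)
  have sub := ent_submodular hp (fun ω => ∑ i ∈ u \ v, Z i ω)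
    (fun ω => ∑ i ∈ v \ u, Z i ω) (fun ω => ∑ i ∈ u ∪ v, Z i ω)
  -- rewrite the triple
  have hd1 : Disjoint (u \ v) (v \ u) := by
    rw [Finset.disjoint_left]
    intro i hi hi'
    exact (Finset.mem_sdiff.mp hi').2 (Finset.mem_sdiff.mp hi).1
  have hd2 : Disjoint (u \ v) (u ∩ v) := Finset.disjoint_sdiff_inter u v
  have hd3 : Disjoint (v \ u) (u ∩ v) := by
    rw [Finset.inter_comm]; exact Finset.disjoint_sdiff_inter v u
  have e1 : ent p (fun ω => (∑ i ∈ u \ v, Z i ω, ∑ i ∈ v \ u, Z i ω, ∑ i ∈ u ∪ v, Z i ω))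
      = ent p (fun ω => ∑ i ∈ u \ v, Z i ω) + ent p (fun ω => ∑ i ∈ u ∩ v, Z i ω)
        + ent p (fun ω => ∑ i ∈ v \ u, Z i ω) := by
    have hfun : (fun ω => (∑ i ∈ u \ v, Z i ω, ∑ i ∈ v \ u, Z i ω, ∑ i ∈ u ∪ v, Z i ω))
        = fun ω => ((fun t : G × G × G => (t.1, t.2.2, t.1 + t.2.1 + t.2.2))
            ((∑ i ∈ u \ v, Z i ω, ∑ i ∈ u ∩ v, Z i ω, ∑ i ∈ v \ u, Z i ω))) := by
      funext ω
      dsimp only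
      rw [hS ω]
    calc ent p (fun ω => (∑ i ∈ u \ v, Z i ω, ∑ i ∈ v \ u, Z i ω, ∑ i ∈ u ∪ v, Z i ω))
        = ent p (fun ω => ((fun t : G × G × G => (t.1, t.2.2, t.1 + t.2.1 + t.2.2))
            ((∑ i ∈ u \ v, Z i ω, ∑ i ∈ u ∩ v, Z i ω, ∑ i ∈ v \ u, Z i ω)))) :=
          congrArg (ent p) hfun
      _ = ent p (fun ω => (∑ i ∈ u \ v, Z i ω, ∑ i ∈ u ∩ v, Z i ω, ∑ i ∈ v \ u, Z i ω)) :=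
          ent_comp_eq hp.1 (fun t : G × G × G => (t.1, t.2.2, t.1 + t.2.1 + t.2.2))
            (fun t : G × G × G => (t.1, t.2.2 - t.1 - t.2.1, t.2.1))
            (fun ω => (∑ i ∈ u \ v, Z i ω, ∑ i ∈ u ∩ v, Z i ω, ∑ i ∈ v \ u, Z i ω))
            (fun ω => by
              refine Prod.ext rfl (Prod.ext ?_ rfl)
              show (∑ i ∈ u \ v, Z i ω) + (∑ i ∈ u ∩ v, Z i ω) + (∑ i ∈ v \ u, Z i ω)
                  - (∑ i ∈ u \ v, Z i ω) - (∑ i ∈ v \ u, Z i ω) = ∑ i ∈ u ∩ v, Z i ω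
              abel)
      _ = _ := ent_triple_sum hp hZ hd2 hd1 hd3.symm
  have e2 : ent p (fun ω => (∑ i ∈ u \ v, Z i ω, ∑ i ∈ u ∪ v, Z i ω))
      = ent p (fun ω => ∑ i ∈ u \ v, Z i ω) + ent p (fun ω => ∑ i ∈ v, Z i ω) := by
    have hfun : (fun ω => (∑ i ∈ u \ v, Z i ω, ∑ i ∈ u ∪ v, Z i ω))
        = fun ω => ((fun t : G × G => (t.1, t.1 + t.2))
            ((∑ i ∈ u \ v, Z i ω, ∑ i ∈ v, Z i ω))) := by
      funext ω
      dsimp only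
      rw [hS ω, hv ω]
      exact congrArg (Prod.mk (∑ i ∈ u \ v, Z i ω)) (by abel)
    calc ent p (fun ω => (∑ i ∈ u \ v, Z i ω, ∑ i ∈ u ∪ v, Z i ω))
        = ent p (fun ω => ((fun t : G × G => (t.1, t.1 + t.2))
            ((∑ i ∈ u \ v, Z i ω, ∑ i ∈ v, Z i ω)))) := congrArg (ent p) hfun
      _ = ent p (fun ω => (∑ i ∈ u \ v, Z i ω, ∑ i ∈ v, Z i ω)) :=
          ent_comp_eq hp.1 (fun t : G × G => (t.1, t.1 + t.2))
            (fun t : G × G => (t.1, t.2 - t.1))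
            (fun ω => (∑ i ∈ u \ v, Z i ω, ∑ i ∈ v, Z i ω))
            (fun ω => by
              refine Prod.ext rfl ?_
              show (∑ i ∈ u \ v, Z i ω) + (∑ i ∈ v, Z i ω) - (∑ i ∈ u \ v, Z i ω)
                  = ∑ i ∈ v, Z i ω
              abel)
      _ = _ := ent_pair_sum hp hZ Finset.sdiff_disjoint
  have e3 : ent p (fun ω => (∑ i ∈ v \ u, Z i ω, ∑ i ∈ u ∪ v, Z i ω))
      = ent p (fun ω => ∑ i ∈ v \ u, Z i ω) + ent p (fun ω => ∑ i ∈ u, Z i ω) := by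
    have hfun : (fun ω => (∑ i ∈ v \ u, Z i ω, ∑ i ∈ u ∪ v, Z i ω))
        = fun ω => ((fun t : G × G => (t.1, t.1 + t.2))
            ((∑ i ∈ v \ u, Z i ω, ∑ i ∈ u, Z i ω))) := by
      funext ω
      dsimp only
      rw [hS ω, hu ω]
      exact congrArg (Prod.mk (∑ i ∈ v \ u, Z i ω)) (by abel)
    calc ent p (fun ω => (∑ i ∈ v \ u, Z i ω, ∑ i ∈ u ∪ v, Z i ω))
        = ent p (fun ω => ((fun t : G × G => (t.1, t.1 + t.2))
            ((∑ i ∈ v \ u, Z i ω, ∑ i ∈ u, Z i ω)))) := congrArg (ent p) hfun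
      _ = ent p (fun ω => (∑ i ∈ v \ u, Z i ω, ∑ i ∈ u, Z i ω)) :=
          ent_comp_eq hp.1 (fun t : G × G => (t.1, t.1 + t.2))
            (fun t : G × G => (t.1, t.2 - t.1))
            (fun ω => (∑ i ∈ v \ u, Z i ω, ∑ i ∈ u, Z i ω))
            (fun ω => by
              refine Prod.ext rfl ?_
              show (∑ i ∈ v \ u, Z i ω) + (∑ i ∈ u, Z i ω) - (∑ i ∈ v \ u, Z i ω)
                  = ∑ i ∈ u, Z i ω
              abel)
      _ = _ := ent_pair_sum hp hZ Finset.sdiff_disjoint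
  rw [e1, e2, e3] at sub
  linarith

/-- Chain case of the combinatorial induction. -/
lemma chain_case [DecidableEq G] (hp : IsProbMass p) (hZ : IndepRVs p Z) :
    ∀ (r : ℕ) (D : Multiset (Finset (Fin n))),
      (∀ s ∈ D, ∀ t ∈ D, s ⊆ t ∨ t ⊆ s) →
      (∀ i, r ≤ (D.filter (fun s => i ∈ s)).card) →
      (r : ℝ) * ent p (fun ω => ∑ i ∈ (univ : Finset (Fin n)), Z i ω)
        ≤ ((D.map (fun s => ent p (fun ω => ∑ i ∈ s, Z i ω))).sum) := by
  intro r
  induction r with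
  | zero =>
    intro D _ _
    rw [Nat.cast_zero, zero_mul]
    exact Multiset.sum_nonneg fun x hx => by
      rcases Multiset.mem_map.mp hx with ⟨s, _, rfl⟩
      exact ent_nonneg hp _
  | succ r ih =>
    intro D hchain hdeg
    by_cases huniv : (univ : Finset (Fin n)) ∈ D
    · set D' := D.erase univ with hD'
      have hD : D = (univ : Finset (Fin n)) ::ₘ D' := (Multiset.cons_erase huniv).symm
      have hchain' : ∀ s ∈ D', ∀ t ∈ D', s ⊆ t ∨ t ⊆ s := fun s hs t ht =>
        hchain s (Multiset.mem_of_le (Multiset.erase_le _ _) hs) t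
          (Multiset.mem_of_le (Multiset.erase_le _ _) ht)
      have hdeg' : ∀ i, r ≤ (D'.filter (fun s => i ∈ s)).card := by
        intro i
        have := hdeg i
        have h2 : (Multiset.filter (fun s => i ∈ s) ((univ : Finset (Fin n)) ::ₘ D'))
            = (univ : Finset (Fin n)) ::ₘ Multiset.filter (fun s => i ∈ s) D' :=
          Multiset.filter_cons_of_pos _ (Finset.mem_univ i)
        rw [hD, h2, Multiset.card_cons] at this
        omega
      have hih := ih D' hchain' hdeg'
      have hsum : (D.map (fun s => ent p (fun ω => ∑ i ∈ s, Z i ω))).sum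
          = ent p (fun ω => ∑ i ∈ (univ : Finset (Fin n)), Z i ω)
            + (D'.map (fun s => ent p (fun ω => ∑ i ∈ s, Z i ω))).sum := by
        rw [hD, Multiset.map_cons, Multiset.sum_cons]
      rw [hsum]
      push_cast
      linarith
    · rcases isEmpty_or_nonempty (Fin n) with hn | hn
      · have hzero : ent p (fun ω => ∑ i ∈ (univ : Finset (Fin n)), Z i ω) = 0 := by
          have : (fun ω : Ω => ∑ i ∈ (univ : Finset (Fin n)), Z i ω) = fun _ => (0 : G) := by
            funext ω
            rw [Finset.univ_eq_empty, Finset.sum_empty]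
          rw [this, ent_const hp]
        rw [hzero, mul_zero]
        exact Multiset.sum_nonneg fun x hx => by
          rcases Multiset.mem_map.mp hx with ⟨s, _, rfl⟩
          exact ent_nonneg hp _
      · exfalso
        have hmem : ∀ i : Fin n, ∃ s ∈ D, i ∈ s := by
          intro i
          have h1 : 0 < (D.filter (fun s => i ∈ s)).card := lt_of_lt_of_le (Nat.succ_pos r) (hdeg i)
          rcases Multiset.card_pos_iff_exists_mem.mp h1 with ⟨s, hs⟩
          rw [Multiset.mem_filter] at hs
          exact ⟨s, hs.1, hs.2⟩
        have hD0 : D.toFinset.Nonempty := by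
          rcases hmem (Classical.arbitrary (Fin n)) with ⟨s, hs, _⟩
          exact ⟨s, Multiset.mem_toFinset.mpr hs⟩
        rcases Finset.exists_max_image D.toFinset (fun s => s.card) hD0 with ⟨m, hm, hmax⟩
        have hmD : m ∈ D := Multiset.mem_toFinset.mp hm
        have hmuniv : m = univ := by
          apply Finset.eq_univ_of_forall
          intro i
          rcases hmem i with ⟨s, hs, his⟩
          rcases hchain s hs m hmD with hsub | hsub
          · exact hsub his
          · have hms : m = s := Finset.eq_of_subset_of_card_le hsub
              (hmax s (Multiset.mem_toFinset.mpr hs))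
            rw [hms]
            exact his
        exact huniv (hmuniv ▸ hmD)

/-- Main combinatorial induction via uncrossing. -/
lemma main_ms [DecidableEq G] (hp : IsProbMass p) (hZ : IndepRVs p Z) :
    ∀ (k r : ℕ) (D : Multiset (Finset (Fin n))),
      (D.map (fun s => n * n - s.card * s.card)).sum ≤ k →
      (∀ i, r ≤ (D.filter (fun s => i ∈ s)).card) →
      (r : ℝ) * ent p (fun ω => ∑ i ∈ (univ : Finset (Fin n)), Z i ω)
        ≤ ((D.map (fun s => ent p (fun ω => ∑ i ∈ s, Z i ω))).sum) := by
  intro k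
  induction k using Nat.strong_induction_on with
  | _ k ihk =>
    intro r D hΦ hdeg
    by_cases hchain : ∀ s ∈ D, ∀ t ∈ D, s ⊆ t ∨ t ⊆ s
    · exact chain_case hp hZ r D hchain hdeg
    · push_neg at hchain
      obtain ⟨s, hs, t, ht, hst, hts⟩ := hchain
      have hne : t ≠ s := fun h => hts (h ▸ Finset.Subset.refl t)
      have ht' : t ∈ D.erase s := (Multiset.mem_erase_of_ne hne).mpr ht
      set D₂ := (D.erase s).erase t with hD₂
      have hD : D = s ::ₘ t ::ₘ D₂ := by
        rw [hD₂, Multiset.cons_erase ht', Multiset.cons_erase hs]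
      set E := (s ∪ t) ::ₘ (s ∩ t) ::ₘ D₂ with hE
      -- degrees are preserved
      have hdegE : ∀ i, r ≤ (E.filter (fun s' => i ∈ s')).card := by
        intro i
        have := hdeg i
        rw [hD] at this
        rw [hE]
        rw [Multiset.filter_cons, Multiset.filter_cons, Multiset.card_add, Multiset.card_add]
        rw [Multiset.filter_cons, Multiset.filter_cons, Multiset.card_add, Multiset.card_add]
          at this
        by_cases h1 : i ∈ s <;> by_cases h2 : i ∈ t <;>
          simp only [h1, h2, Finset.mem_union, Finset.mem_inter, if_pos, if_neg, or_self,
            and_self, true_or, or_true, true_and, and_true, if_true, if_false,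
            not_false_eq_true, Multiset.card_singleton, Multiset.card_zero] at this ⊢ <;>
          omega
      -- potential strictly decreases
      have hcard : s.card < (s ∪ t).card ∧ t.card < (s ∪ t).card := by
        constructor
        · apply Finset.card_lt_card
          rw [Finset.ssubset_iff_of_subset Finset.subset_union_left]
          rcases Finset.not_subset.mp hts with ⟨x, hxt, hxs⟩
          exact ⟨x, Finset.mem_union_right s hxt, hxs⟩
        · apply Finset.card_lt_card
          rw [Finset.ssubset_iff_of_subset Finset.subset_union_right]
          rcases Finset.not_subset.mp hst with ⟨x, hxs, hxt⟩
          exact ⟨x, Finset.mem_union_left t hxs, hxt⟩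
      have hsumc : (s ∪ t).card + (s ∩ t).card = s.card + t.card :=
        Finset.card_union_add_card_inter s t
      have hquad : s.card * s.card + t.card * t.card
          < (s ∪ t).card * (s ∪ t).card + (s ∩ t).card * (s ∩ t).card := by
        nlinarith [hcard.1, hcard.2, hsumc]
      have hbound : ∀ w : Finset (Fin n), w.card * w.card ≤ n * n := fun w =>
        Nat.mul_le_mul (le_trans (Finset.card_le_univ w) (le_of_eq (Fintype.card_fin n)))
          (le_trans (Finset.card_le_univ w) (le_of_eq (Fintype.card_fin n)))
      have hΦE : (E.map (fun s' => n * n - s'.card * s'.card)).sum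
          < (D.map (fun s' => n * n - s'.card * s'.card)).sum := by
        rw [hD, hE]
        simp only [Multiset.map_cons, Multiset.sum_cons]
        have b1 := hbound s; have b2 := hbound t
        have b3 := hbound (s ∪ t); have b4 := hbound (s ∩ t)
        omega
      have hΦE' : (E.map (fun s' => n * n - s'.card * s'.card)).sum < k :=
        lt_of_lt_of_le hΦE hΦ
      have hih := ihk _ hΦE' r E le_rfl hdegE
      have hkey := ent_union_inter hp hZ s t
      rw [hD, hE] at *
      simp only [Multiset.map_cons, Multiset.sum_cons] at hih ⊢
      linarith

end EntAux4

/-- For an $r$-regular hypergraph $\mathcal C$ on $[n]$ and independent random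
variables in an abelian group, $r\,H(Z_1+\dots+Z_n) \le \sum_{s\in\mathcal C} H(\sum_{i\in s} Z_i)$. -/
theorem entropy_sum_regular_hypergraph {Ω G : Type*} [Fintype Ω] [AddCommGroup G] {n : ℕ}
    (p : Ω → ℝ) (hp : IsProbMass p) (Z : Fin n → Ω → G) (hZ : IndepRVs p Z)
    (C : Finset (Finset (Fin n))) (r : ℕ)
    (hreg : ∀ i : Fin n, (C.filter (fun s => i ∈ s)).card = r) :
    (r : ℝ) * ent p (fun ω => ∑ i, Z i ω)
      ≤ ∑ s ∈ C, ent p (fun ω => ∑ i ∈ s, Z i ω) := by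
  letI := Classical.decEq G
  have hdeg : ∀ i : Fin n, r ≤ Multiset.card (C.val.filter (fun s => i ∈ s)) := by
    intro i
    exact (hreg i).symm.le
  have hmain := main_ms hp hZ ((C.val).map
      (fun s => n * n - s.card * s.card)).sum r C.val le_rfl hdeg
  exact hmain
end

section
/- Let X1,…,Xk be finite sets, C a collection of subsets of [k], and α: C → ℝ≥0 a fractional covering of [k]. For any finite set Y ⊆ X1 × ⋯ × Xk, |Y| ≤ ∏_{s∈C} |π_s(Y)|^{α_s}, where π_s denotes the coordinate projection onto the coordinates in s. -/
open Finset

private theorem sum_prod_rpow_le {ι κ : Type*} [Fintype κ] (A : Finset ι) (w : ι → ℝ)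
    (c : ι → κ → ℝ) (hw : ∀ s ∈ A, 0 ≤ w s) (hc : ∀ s v, 0 ≤ c s v)
    (hw1 : 1 ≤ ∑ s ∈ A, w s) :
    ∑ v : κ, ∏ s ∈ A, c s v ^ w s ≤ ∏ s ∈ A, (∑ v : κ, c s v) ^ w s := by
  classical
  set A' : Finset ι := A.filter (fun s => w s ≠ 0) with hA'
  have hA'sub : A' ⊆ A := filter_subset _ _
  have hprodz : ∀ z : ι → ℝ, ∏ s ∈ A, z s ^ w s = ∏ s ∈ A', z s ^ w s := by
    intro z
    rw [← Finset.prod_filter_mul_prod_filter_not A (fun s => w s ≠ 0)]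
    have h0 : ∏ s ∈ A.filter (fun s => ¬ w s ≠ 0), z s ^ w s = 1 :=
      Finset.prod_eq_one (by
        intro s hs
        simp only [Finset.mem_filter, not_not] at hs
        rw [hs.2, Real.rpow_zero])
    rw [h0, mul_one]
  have hsum' : ∑ s ∈ A', w s = ∑ s ∈ A, w s := Finset.sum_filter_ne_zero A
  have hwpos : ∀ s ∈ A', 0 < w s := by
    intro s hs
    simp only [hA', Finset.mem_filter] at hs
    exact lt_of_le_of_ne (hw s hs.1) (Ne.symm hs.2)
  rw [hprodz]
  simp only [hprodz]
  by_cases hzero : ∃ s ∈ A', ∑ v : κ, c s v = 0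
  · obtain ⟨s₀, hs₀, hC₀⟩ := hzero
    have hc0 : ∀ v : κ, c s₀ v = 0 := by
      intro v
      have := (Finset.sum_eq_zero_iff_of_nonneg (fun v _ => hc s₀ v)).1 hC₀
      exact this v (mem_univ v)
    have hR : ∏ s ∈ A', (∑ v : κ, c s v) ^ w s = 0 := by
      apply Finset.prod_eq_zero hs₀
      rw [hC₀, Real.zero_rpow]
      simp only [hA', Finset.mem_filter] at hs₀
      exact hs₀.2
    have hL : ∑ v : κ, ∏ s ∈ A', c s v ^ w s = 0 := by
      apply Finset.sum_eq_zero
      intro v _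
      apply Finset.prod_eq_zero hs₀
      rw [hc0 v, Real.zero_rpow]
      simp only [hA', Finset.mem_filter] at hs₀
      exact hs₀.2
    rw [hL, hR]
  · push_neg at hzero
    set Cs : ι → ℝ := fun s => ∑ v : κ, c s v with hCs
    have hCpos : ∀ s ∈ A', 0 < Cs s :=
      fun s hs => lt_of_le_of_ne (Finset.sum_nonneg fun v _ => hc s v) (Ne.symm (hzero s hs))
    set T : ℝ := ∑ s ∈ A', w s with hT
    have hT1 : 1 ≤ T := by rw [hsum']; exact hw1
    have hTpos : 0 < T := lt_of_lt_of_le one_pos hT1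
    -- termwise bound
    have key1 : ∀ v : κ, ∏ s ∈ A', c s v ^ w s
        ≤ (∏ s ∈ A', Cs s ^ w s) * ∏ s ∈ A', (c s v / Cs s) ^ (w s / T) := by
      intro v
      rw [← Finset.prod_mul_distrib]
      apply Finset.prod_le_prod
      · intro s hs; exact Real.rpow_nonneg (hc s v) _
      · intro s hs
        have hCp := hCpos s hs
        have hd0 : 0 ≤ c s v / Cs s := div_nonneg (hc s v) hCp.le
        have hd1 : c s v / Cs s ≤ 1 := by
          rw [div_le_one hCp]
          exact Finset.single_le_sum (fun v _ => hc s v) (mem_univ v)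
        have hexp : w s / T ≤ w s := by
          rw [div_le_iff₀ hTpos]
          nlinarith [hwpos s hs]
        have hcv : c s v = Cs s * (c s v / Cs s) := by field_simp
        calc c s v ^ w s = (Cs s * (c s v / Cs s)) ^ w s := by rw [← hcv]
          _ = Cs s ^ w s * (c s v / Cs s) ^ w s := Real.mul_rpow hCp.le hd0
          _ ≤ Cs s ^ w s * (c s v / Cs s) ^ (w s / T) := by
              apply mul_le_mul_of_nonneg_left _ (Real.rpow_nonneg hCp.le _)
              rcases eq_or_lt_of_le hd0 with h | h
              · rw [← h, Real.zero_rpow (ne_of_gt (hwpos s hs)),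
                  Real.zero_rpow (ne_of_gt (div_pos (hwpos s hs) hTpos))]
              · exact Real.rpow_le_rpow_of_exponent_ge h hd1 hexp
    have key2 : ∑ v : κ, ∏ s ∈ A', (c s v / Cs s) ^ (w s / T) ≤ 1 := by
      have h1 : ∀ v : κ, ∏ s ∈ A', (c s v / Cs s) ^ (w s / T)
          ≤ ∑ s ∈ A', (w s / T) * (c s v / Cs s) := by
        intro v
        apply Real.geom_mean_le_arith_mean_weighted
        · intro s hs; exact div_nonneg (hw s (hA'sub hs)) hTpos.le
        · rw [← Finset.sum_div, ← hT, div_self (ne_of_gt hTpos)]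
        · intro s hs; exact div_nonneg (hc s v) (hCpos s hs).le
      calc ∑ v : κ, ∏ s ∈ A', (c s v / Cs s) ^ (w s / T)
          ≤ ∑ v : κ, ∑ s ∈ A', (w s / T) * (c s v / Cs s) :=
            Finset.sum_le_sum fun v _ => h1 v
        _ = ∑ s ∈ A', (w s / T) * (∑ v : κ, c s v / Cs s) := by
            rw [Finset.sum_comm]
            exact Finset.sum_congr rfl fun s _ => by rw [Finset.mul_sum]
        _ = ∑ s ∈ A', (w s / T) := by
            apply Finset.sum_congr rfl
            intro s hs
            rw [← Finset.sum_div]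
            show w s / T * (Cs s / Cs s) = w s / T
            rw [div_self (ne_of_gt (hCpos s hs)), mul_one]
        _ = 1 := by rw [← Finset.sum_div, ← hT, div_self (ne_of_gt hTpos)]
    calc ∑ v : κ, ∏ s ∈ A', c s v ^ w s
        ≤ ∑ v : κ, (∏ s ∈ A', Cs s ^ w s) * ∏ s ∈ A', (c s v / Cs s) ^ (w s / T) :=
          Finset.sum_le_sum fun v _ => key1 v
      _ = (∏ s ∈ A', Cs s ^ w s) * ∑ v : κ, ∏ s ∈ A', (c s v / Cs s) ^ (w s / T) := by
          rw [Finset.mul_sum]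
      _ ≤ (∏ s ∈ A', Cs s ^ w s) * 1 := by
          apply mul_le_mul_of_nonneg_left key2
          exact Finset.prod_nonneg fun s hs => Real.rpow_nonneg (hCpos s hs).le _
      _ = ∏ s ∈ A', Cs s ^ w s := mul_one _

private def projO {k : ℕ} (X : Fin k → Type*) (J : Finset (Fin k)) (x : ∀ i, X i) :
    ∀ i, Option (X i) := fun i => if i ∈ J then some (x i) else none

private theorem projO_card_insert {k : ℕ} (X : Fin k → Type*) [∀ i, Fintype (X i)]
    [∀ i, DecidableEq (X i)] (Y : Finset (∀ i, X i)) (a : Fin k) (J : Finset (Fin k))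
    (ha : a ∉ J) :
    (Y.image (projO X (insert a J))).card
      = ∑ v : X a, ((Y.filter (fun x => x a = v)).image (projO X J)).card := by
  classical
  have hY : Y = Finset.univ.biUnion (fun v : X a => Y.filter (fun x => x a = v)) := by
    ext x; simp
  have h1 : Y.image (projO X (insert a J))
      = Finset.univ.biUnion
        (fun v : X a => (Y.filter (fun x => x a = v)).image (projO X (insert a J))) := by
    conv_lhs => rw [hY]
    rw [Finset.biUnion_image]
  have hmem : ∀ (v : X a) (z : ∀ i, Option (X i)),
      z ∈ (Y.filter (fun x => x a = v)).image (projO X (insert a J)) → z a = some v := by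
    intro v z hz
    obtain ⟨x, hx, rfl⟩ := Finset.mem_image.1 hz
    have hxa : x a = v := (Finset.mem_filter.1 hx).2
    simp [projO, hxa]
  rw [h1, Finset.card_biUnion]
  · apply Finset.sum_congr rfl
    intro v _
    have himg : (Y.filter (fun x => x a = v)).image (projO X (insert a J))
        = ((Y.filter (fun x => x a = v)).image (projO X J)).image
            (fun f => Function.update f a (some v)) := by
      rw [Finset.image_image]
      apply Finset.image_congr
      intro x hx
      simp only [Finset.coe_filter, Set.mem_setOf_eq] at hx
      funext i
      by_cases hia : i = a
      · subst hia
        simp [Function.update_self, projO, hx.2]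
      · simp only [Function.comp_apply, Function.update_of_ne hia, projO,
          Finset.mem_insert, hia, false_or]
    rw [himg]
    apply Finset.card_image_of_injOn
    intro f hf g hg hfg
    have hfa : ∀ h ∈ (Y.filter (fun x => x a = v)).image (projO X J),
        h a = (none : Option (X a)) := by
      intro h hh
      obtain ⟨x, _, rfl⟩ := Finset.mem_image.1 hh
      simp [projO, ha]
    funext i
    by_cases hia : i = a
    · subst hia
      rw [hfa f (by simpa using hf), hfa g (by simpa using hg)]
    · have := congrFun hfg i
      simpa [Function.update_of_ne hia] using this
  · intro v _ w _ hvw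
    rw [Function.onFun, Finset.disjoint_left]
    intro z hzv hzw
    have h1 := hmem v z hzv
    have h2 := hmem w z hzw
    rw [h1] at h2
    exact hvw (Option.some_injective _ h2)

private theorem card_image_subtype {k : ℕ} (X : Fin k → Type*) [∀ i, Fintype (X i)]
    [∀ i, DecidableEq (X i)] (Y : Finset (∀ i, X i)) (s : Finset (Fin k)) :
    (Y.image (fun x => fun i : {i // i ∈ s} => x i)).card = (Y.image (projO X s)).card := by
  classical
  set e : (∀ i : {i // i ∈ s}, X i) → (∀ i, Option (X i)) :=
    fun f i => if h : i ∈ s then some (f ⟨i, h⟩) else none with he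
  have hinj : Function.Injective e := by
    intro f g hfg
    funext i
    have := congrFun hfg i.1
    rw [he] at this
    simp only [dif_pos i.2] at this
    exact Option.some_injective _ this
  calc (Y.image (fun x => fun i : {i // i ∈ s} => x i)).card
      = ((Y.image (fun x => fun i : {i // i ∈ s} => x i)).image e).card :=
        (Finset.card_image_of_injective _ hinj).symm
    _ = (Y.image (projO X s)).card := by
        rw [Finset.image_image]
        have himg : Y.image (e ∘ (fun x => fun i : {i // i ∈ s} => x i))
            = Y.image (projO X s) := by
          apply Finset.image_congr
          intro x _
          funext i
          by_cases h : i ∈ s <;> simp [he, projO, h]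
        rw [himg]

private theorem card_image_projO_univ {k : ℕ} (X : Fin k → Type*) [∀ i, Fintype (X i)]
    [∀ i, DecidableEq (X i)] (Y : Finset (∀ i, X i)) :
    (Y.image (projO X Finset.univ)).card = Y.card := by
  apply Finset.card_image_of_injective
  intro x y hxy
  funext i
  have := congrFun hxy i
  simp only [projO, Finset.mem_univ, if_true] at this
  exact Option.some_injective _ this

private theorem shearer_aux {k : ℕ} (X : Fin k → Type*) [∀ i, Fintype (X i)]
    [∀ i, DecidableEq (X i)] (C : Finset (Finset (Fin k))) (α : Finset (Fin k) → ℝ)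
    (hα : ∀ s ∈ C, 0 ≤ α s) (I : Finset (Fin k)) :
    ∀ Y : Finset (∀ i, X i),
      (∀ i ∈ I, 1 ≤ ∑ s ∈ C.filter (fun s => i ∈ s), α s) →
      ((Y.image (projO X I)).card : ℝ)
        ≤ ∏ s ∈ C, ((Y.image (projO X (s ∩ I))).card : ℝ) ^ α s := by
  classical
  induction I using Finset.induction_on with
  | empty =>
    intro Y _
    rcases Y.eq_empty_or_nonempty with rfl | hY
    · simp only [Finset.image_empty, Finset.card_empty, Nat.cast_zero]
      exact Finset.prod_nonneg fun s _ => Real.rpow_nonneg le_rfl _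
    · have hconst : ∀ J : Finset (Fin k), J = ∅ →
          Y.image (projO X J) = {fun _ => none} := by
        intro J hJ
        subst hJ
        have : projO X (∅ : Finset (Fin k)) = fun _ => (fun _ => none) := by
          funext x i; simp [projO]
        rw [this, Finset.image_const hY]
      rw [hconst ∅ rfl, Finset.card_singleton]
      have : ∀ s ∈ C, ((Y.image (projO X (s ∩ ∅))).card : ℝ) ^ α s = 1 := by
        intro s _
        rw [Finset.inter_empty, hconst ∅ rfl, Finset.card_singleton]
        simp
      rw [Finset.prod_congr rfl this, Finset.prod_const_one]
      norm_num
  | @insert a I' ha IH =>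
    intro Y hcov
    set Yv : X a → Finset (∀ i, X i) := fun v => Y.filter (fun x => x a = v) with hYv
    set c : Finset (Fin k) → X a → ℝ :=
      fun s v => (((Yv v).image (projO X (s ∩ I'))).card : ℝ) with hc
    set D : Finset (Fin k) → ℝ :=
      fun s => ((Y.image (projO X (s ∩ insert a I'))).card : ℝ) with hD
    have hc0 : ∀ s v, 0 ≤ c s v := fun s v => Nat.cast_nonneg _
    have hD0 : ∀ s, 0 ≤ D s := fun s => Nat.cast_nonneg _
    -- step 1 : LHS as a sum over fibers
    have hL : ((Y.image (projO X (insert a I'))).card : ℝ)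
        = ∑ v : X a, (((Yv v).image (projO X I')).card : ℝ) := by
      rw [projO_card_insert X Y a I' ha]
      push_cast
      rfl
    -- step 2 : IH on each fiber
    have hIH : ∀ v : X a, (((Yv v).image (projO X I')).card : ℝ)
        ≤ ∏ s ∈ C, c s v ^ α s :=
      fun v => IH (Yv v) (fun i hi => hcov i (Finset.mem_insert_of_mem hi))
    -- for s not containing a
    have hB : ∀ s ∈ C, a ∉ s → ∀ v : X a, c s v ≤ D s := by
      intro s _ has v
      have hsI : s ∩ insert a I' = s ∩ I' := by
        ext i
        simp only [Finset.mem_inter, Finset.mem_insert]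
        constructor
        · rintro ⟨hi, rfl | hi'⟩
          · exact absurd hi has
          · exact ⟨hi, hi'⟩
        · rintro ⟨hi, hi'⟩; exact ⟨hi, Or.inr hi'⟩
      show c s v ≤ ((Y.image (projO X (s ∩ insert a I'))).card : ℝ)
      rw [hsI]
      show (((Yv v).image (projO X (s ∩ I'))).card : ℝ)
          ≤ ((Y.image (projO X (s ∩ I'))).card : ℝ)
      exact_mod_cast Finset.card_le_card
        (Finset.image_subset_image (Finset.filter_subset _ _))
    -- for s containing a
    have hA : ∀ s ∈ C, a ∈ s → ∑ v : X a, c s v = D s := by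
      intro s _ has
      have hsI : s ∩ insert a I' = insert a (s ∩ I') := by
        ext i
        simp only [Finset.mem_inter, Finset.mem_insert]
        constructor
        · rintro ⟨hi, rfl | hi'⟩
          · exact Or.inl rfl
          · exact Or.inr ⟨hi, hi'⟩
        · rintro (rfl | ⟨hi, hi'⟩)
          · exact ⟨has, Or.inl rfl⟩
          · exact ⟨hi, Or.inr hi'⟩
      have haI : a ∉ s ∩ I' := fun h => ha (Finset.mem_inter.1 h).2
      show ∑ v : X a, c s v = ((Y.image (projO X (s ∩ insert a I'))).card : ℝ)
      rw [hsI, projO_card_insert X Y a (s ∩ I') haI]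
      push_cast
      rfl
    set B₁ : Finset (Finset (Fin k)) := C.filter (fun s => a ∈ s) with hB₁
    set B₂ : Finset (Finset (Fin k)) := C.filter (fun s => ¬ a ∈ s) with hB₂
    have hsplit : ∀ z : Finset (Fin k) → ℝ,
        ∏ s ∈ C, z s = (∏ s ∈ B₁, z s) * ∏ s ∈ B₂, z s := by
      intro z
      rw [hB₁, hB₂, Finset.prod_filter_mul_prod_filter_not]
    -- Hölder
    have hHolder : ∑ v : X a, ∏ s ∈ B₁, c s v ^ α s
        ≤ ∏ s ∈ B₁, (∑ v : X a, c s v) ^ α s := by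
      apply sum_prod_rpow_le B₁ α c
        (fun s hs => hα s (Finset.mem_filter.1 hs).1) hc0
      exact hcov a (Finset.mem_insert_self a I')
    calc ((Y.image (projO X (insert a I'))).card : ℝ)
        = ∑ v : X a, (((Yv v).image (projO X I')).card : ℝ) := hL
      _ ≤ ∑ v : X a, ∏ s ∈ C, c s v ^ α s := Finset.sum_le_sum fun v _ => hIH v
      _ = ∑ v : X a, (∏ s ∈ B₁, c s v ^ α s) * ∏ s ∈ B₂, c s v ^ α s := by
          exact Finset.sum_congr rfl fun v _ => hsplit _
      _ ≤ ∑ v : X a, (∏ s ∈ B₁, c s v ^ α s) * ∏ s ∈ B₂, D s ^ α s := by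
          apply Finset.sum_le_sum
          intro v _
          apply mul_le_mul_of_nonneg_left _
            (Finset.prod_nonneg fun s _ => Real.rpow_nonneg (hc0 s v) _)
          apply Finset.prod_le_prod (fun s _ => Real.rpow_nonneg (hc0 s v) _)
          intro s hs
          have hs' := Finset.mem_filter.1 hs
          exact Real.rpow_le_rpow (hc0 s v) (hB s hs'.1 hs'.2 v) (hα s hs'.1)
      _ = (∏ s ∈ B₂, D s ^ α s) * ∑ v : X a, ∏ s ∈ B₁, c s v ^ α s := by
          rw [Finset.mul_sum]
          exact Finset.sum_congr rfl fun v _ => mul_comm _ _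
      _ ≤ (∏ s ∈ B₂, D s ^ α s) * ∏ s ∈ B₁, (∑ v : X a, c s v) ^ α s := by
          apply mul_le_mul_of_nonneg_left hHolder
          exact Finset.prod_nonneg fun s _ => Real.rpow_nonneg (hD0 s) _
      _ = (∏ s ∈ B₂, D s ^ α s) * ∏ s ∈ B₁, D s ^ α s := by
          congr 1
          apply Finset.prod_congr rfl
          intro s hs
          have hs' := Finset.mem_filter.1 hs
          rw [hA s hs'.1 hs'.2]
      _ = ∏ s ∈ C, D s ^ α s := by rw [hsplit (fun s => D s ^ α s), mul_comm]


/-- Fractional-covering (Shearer-type) inequality for cardinalities of projections: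
for any `Y ⊆ X₁ × ⋯ × X_k` and fractional covering `α` using the collection `C`,
`|Y| ≤ ∏_{s ∈ C} |π_s(Y)|^{α_s}`. -/
theorem card_le_prod_proj_rpow {k : ℕ} (X : Fin k → Type*)
    [∀ i, Fintype (X i)] [∀ i, DecidableEq (X i)]
    (Y : Finset (∀ i, X i)) (C : Finset (Finset (Fin k))) (α : Finset (Fin k) → ℝ)
    (hα : ∀ s ∈ C, 0 ≤ α s)
    (hcov : ∀ i : Fin k, 1 ≤ ∑ s ∈ C.filter (fun s => i ∈ s), α s) :
    (Y.card : ℝ)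
      ≤ ∏ s ∈ C, ((Y.image (fun x => fun i : {i // i ∈ s} => x i)).card : ℝ) ^ α s := by
  have h := shearer_aux X C α hα Finset.univ Y (fun i _ => hcov i)
  rw [card_image_projO_univ] at h
  refine h.trans_eq (Finset.prod_congr rfl fun s _ => ?_)
  rw [Finset.inter_univ, card_image_subtype]
end
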